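/- arXiv:1404.1728 — 2 statements merged into one kernel-verified Lean document; each statement's English description precedes it below -/
import Mathlib

section
/- Let M be a simple non-trivial connected matroid. If M = P(N1,…,Ns) and M = P(N1',…,Nt') are two iterated parallel decompositions of M into non-trivial parallel irreducible matroids, then s = t and, after reindexing, Ni = Ni' as matroids (the decomposition is unique up to permutation of the components). -/
open Polynomial

namespace SPPaper

noncomputable section
open Classical

universe u
variable {α : Type u} {V : Type u}

/-- Deletion of a set of elements: `M − X`. -/
def del (M : Matroid α) (X : Set α) : Matroid α := M.restrict (M.E \ X)

/-- Contraction of a set of elements: `M/X = (M✶ − X)✶`. -/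
def con (M : Matroid α) (X : Set α) : Matroid α := (del M.dual X).dual

/-- The rank of a set: the (common) cardinality of maximal independent subsets. -/
def rk (M : Matroid α) (X : Set α) : ℕ :=
  sSup {n | ∃ I, I ⊆ X ∧ M.Indep I ∧ I.ncard = n}

/-- The rank of a matroid. -/
def rank (M : Matroid α) : ℕ := rk M M.E

/-- `e` is a loop of `M` if `{e}` is dependent. -/
def IsLoop (M : Matroid α) (e : α) : Prop := e ∈ M.E ∧ ¬ M.Indep {e}

/-- A matroid is loopless if it has no loops. -/
def Loopless (M : Matroid α) : Prop := ∀ e, ¬ IsLoop M e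

/-- `e` is a coloop of `M` if it lies in every basis. -/
def IsColoop (M : Matroid α) (e : α) : Prop := e ∈ M.E ∧ ∀ B, M.IsBase B → e ∈ B

/-- A circuit of a matroid: a minimal dependent set. -/
def IsCircuit (M : Matroid α) (C : Set α) : Prop := M.Dep C ∧ ∀ D, D ⊂ C → M.Indep D

/-- A matroid is simple if it has no loops and no two-element circuits. -/
def Simple (M : Matroid α) : Prop := Loopless M ∧ ∀ e f : α, ¬ IsCircuit M {e, f}

/-- `h(M;x) = t(M;x,0)` where `t` is the Tutte polynomial:
`t(M;x,y) = ∑_{A ⊆ E} (x−1)^(r(E)−r(A)) (y−1)^(|A|−r(A))`. -/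
def hPoly (M : Matroid α) [Fintype α] : Polynomial ℤ :=
  ∑ A ∈ (Set.toFinite M.E).toFinset.powerset,
    (Polynomial.X - 1) ^ (rank M - rk M (A : Set α)) *
      (-1 : Polynomial ℤ) ^ (A.card - rk M (A : Set α))

/-- The `i`-th entry of the h-vector of the broken circuit complex:
`h(M;x) = ∑_{i=0}^r h_i x^(r−i)`. -/
def hvec (M : Matroid α) [Fintype α] (i : ℕ) : ℤ :=
  if i ≤ rank M then (hPoly M).coeff (rank M - i) else 0

/-- The beta invariant `β(M) = (−1)^(r(E)) ∑_{A ⊆ E} (−1)^(|A|) r(A)`. -/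
def beta (M : Matroid α) [Fintype α] : ℤ :=
  (-1) ^ rank M *
    ∑ A ∈ (Set.toFinite M.E).toFinset.powerset, (-1 : ℤ) ^ A.card * (rk M (A : Set α) : ℤ)

/-- `P` is the direct sum of `M1` and `M2`. -/
def IsDirSumOf (P M1 M2 : Matroid α) : Prop :=
  ∃ h : Disjoint M1.E M2.E, P = Matroid.disjointSum M1 M2 h

/-- A matroid is connected if its ground set is nonempty and it is not the direct sum
of two matroids on nonempty ground sets. -/
def Connected (M : Matroid α) : Prop :=
  M.E.Nonempty ∧ ¬ ∃ M1 M2 : Matroid α, M1.E.Nonempty ∧ M2.E.Nonempty ∧ IsDirSumOf M M1 M2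

/-- `M` is the matroid on ground set `E` whose circuits are exactly the sets satisfying `𝒞`. -/
def HasCircuits (M : Matroid α) (E : Set α) (𝒞 : Set α → Prop) : Prop :=
  M.E = E ∧ ∀ C, IsCircuit M C ↔ 𝒞 C

/-- The circuits of the parallel connection of `M1` and `M2` with basepoint `e`. -/
def PConnCircuit (M1 M2 : Matroid α) (e : α) (C : Set α) : Prop :=
  IsCircuit M1 C ∨ IsCircuit M2 C ∨
    ∃ C1 C2, IsCircuit M1 C1 ∧ IsCircuit M2 C2 ∧ e ∈ C1 ∧ e ∈ C2 ∧ C = (C1 ∪ C2) \ {e}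

/-- The circuits of the series connection of `M1` and `M2` with basepoint `e`. -/
def SConnCircuit (M1 M2 : Matroid α) (e : α) (C : Set α) : Prop :=
  IsCircuit (del M1 {e}) C ∨ IsCircuit (del M2 {e}) C ∨
    ∃ C1 C2, IsCircuit M1 C1 ∧ IsCircuit M2 C2 ∧ e ∈ C1 ∧ e ∈ C2 ∧ C = C1 ∪ C2

/-- `P` is the parallel connection of `M1` and `M2` with respect to the basepoint `e`
(including the degenerate conventions when `e` is a loop or a coloop). -/
def IsParallelConn (P M1 M2 : Matroid α) (e : α) : Prop :=
  if IsLoop M1 e then IsDirSumOf P M1 (con M2 {e})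
  else if IsColoop M1 e then IsDirSumOf P (del M1 {e}) M2
  else if IsLoop M2 e then IsDirSumOf P (con M1 {e}) M2
  else if IsColoop M2 e then IsDirSumOf P M1 (del M2 {e})
  else HasCircuits P (M1.E ∪ M2.E) (PConnCircuit M1 M2 e)

/-- `S` is the series connection of `M1` and `M2` with respect to the basepoint `e`
(including the degenerate conventions when `e` is a loop or a coloop). -/
def IsSeriesConn (S M1 M2 : Matroid α) (e : α) : Prop :=
  if IsLoop M1 e then IsDirSumOf S (con M1 {e}) M2
  else if IsColoop M1 e then IsDirSumOf S M1 (del M2 {e})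
  else if IsLoop M2 e then IsDirSumOf S M1 (con M2 {e})
  else if IsColoop M2 e then IsDirSumOf S (del M1 {e}) M2
  else HasCircuits S (M1.E ∪ M2.E) (SConnCircuit M1 M2 e)

/-- `N` is a two-element circuit. -/
def TwoCircuit (N : Matroid α) : Prop :=
  ∃ e f : α, e ≠ f ∧ N.E = {e, f} ∧ IsCircuit N N.E

/-- `M` is a series extension of `N`: `M = S(N, C₂)` for a 2-circuit `C₂`. -/
def IsSeriesExtOf (M N : Matroid α) : Prop :=
  ∃ (C : Matroid α) (e : α), TwoCircuit C ∧ N.E ∩ C.E = {e} ∧ IsSeriesConn M N C e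

/-- `M` is a parallel extension of `N`: `M = P(N, C₂)` for a 2-circuit `C₂`. -/
def IsParallelExtOf (M N : Matroid α) : Prop :=
  ∃ (C : Matroid α) (e : α), TwoCircuit C ∧ N.E ∩ C.E = {e} ∧ IsParallelConn M N C e

/-- A series-parallel network: a matroid obtainable from a coloop by a sequence of
series and parallel extensions. -/
inductive IsSPNetwork : Matroid α → Prop
  | coloop (M : Matroid α) (e : α) : M.E = {e} → IsColoop M e → IsSPNetwork M
  | series (M N : Matroid α) : IsSPNetwork N → IsSeriesExtOf M N → IsSPNetwork M
  | parallel (M N : Matroid α) : IsSPNetwork N → IsParallelExtOf M N → IsSPNetwork M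

/-- `M` is parallel irreducible at `f`: either `M` is trivial or `M` is not the parallel
connection, with basepoint `f`, of two matroids each having at least two elements. -/
def ParallelIrreducibleAt (M : Matroid α) (f : α) : Prop :=
  M.E.Subsingleton ∨
    ¬ ∃ M1 M2 : Matroid α, M1.E ∩ M2.E = {f} ∧ M1.E.Nontrivial ∧ M2.E.Nontrivial ∧
        IsParallelConn M M1 M2 f

/-- `M` is parallel irreducible. -/
def ParallelIrreducible (M : Matroid α) : Prop := ∀ f ∈ M.E, ParallelIrreducibleAt M f

/-- `M` is the iterated parallel connection of the list `l` of matroids. -/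
inductive IsIterPConn : Matroid α → List (Matroid α) → Prop
  | base (M : Matroid α) : IsIterPConn M [M]
  | step (P M N : Matroid α) (l : List (Matroid α)) (e : α) :
      IsIterPConn P l → P.E ∩ N.E = {e} → IsParallelConn M P N e →
      IsIterPConn M (l ++ [N])

/-- `M` is the cycle matroid of the graph `G` (on the ground set `G.edgeSet`):
a set of edges is independent iff it contains no cycle. -/
def IsCycleMatroid (M : Matroid (Sym2 V)) (G : SimpleGraph V) : Prop :=
  M.E = G.edgeSet ∧ ∀ X ⊆ M.E, (M.Indep X ↔ (SimpleGraph.fromEdgeSet X).IsAcyclic)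

/-- `M` is (isomorphic to) the cycle matroid of the graph `G`. -/
def IsCycleMatroidOf (M : Matroid α) {W : Type} (G : SimpleGraph W) : Prop :=
  ∃ φ : α → Sym2 W, Set.InjOn φ M.E ∧ φ '' M.E = G.edgeSet ∧
    ∀ X ⊆ M.E, (M.Indep X ↔ (SimpleGraph.fromEdgeSet (φ '' X)).IsAcyclic)

/-- A matroid is graphic if it is isomorphic to the cycle matroid of a graph. -/
def IsGraphic (M : Matroid α) : Prop := ∃ (W : Type) (G : SimpleGraph W), IsCycleMatroidOf M G

/-- A nonempty set of elements, each lying in some circuit, such that every circuit of `M`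
containing one of them contains all of them. -/
def SeriesSet (M : Matroid α) (X : Set α) : Prop :=
  X ⊆ M.E ∧ X.Nonempty ∧ (∀ e ∈ X, ∃ C, IsCircuit M C ∧ e ∈ C) ∧
    ∀ C, IsCircuit M C → X ⊆ C ∨ Disjoint X C

/-- A series class: a maximal `SeriesSet`. -/
def SeriesClass (M : Matroid α) (X : Set α) : Prop :=
  SeriesSet M X ∧ ∀ Y, SeriesSet M Y → X ⊆ Y → X = Y

/-- A removable line of a block `G` (with cycle matroid `M`): a line (a nontrivial path
all of whose internal vertices have degree 2) whose removal (edges together with the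
internal vertices) leaves a block. -/
def IsRemovableLine (G : SimpleGraph V) (M : Matroid (Sym2 V)) (X : Set (Sym2 V)) : Prop :=
  ∃ (u v : V) (p : G.Walk u v), p.IsPath ∧ 0 < p.length ∧ X = {e | e ∈ p.edges} ∧
    (∀ w ∈ p.support, w ≠ u → w ≠ v → (G.neighborSet w).ncard = 2) ∧
    ((G.deleteEdges X).induce {w : V | ¬ (w ∈ p.support ∧ w ≠ u ∧ w ≠ v)}).Connected ∧
    Connected (del M X)

/-- One subdivision step: replace an edge `uv` by a path `u-w-v` through a new vertex `w`. -/
def SubdivStep (G G' : SimpleGraph V) : Prop :=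
  ∃ u v w : V, G.Adj u v ∧ w ∉ G.support ∧ w ≠ u ∧ w ≠ v ∧
    G' = SimpleGraph.fromEdgeSet ((G.edgeSet \ {s(u, v)}) ∪ {s(u, w), s(w, v)})

/-- `H` is a subdivision of the complete graph `K₄`. -/
def IsSubdivOfK4 (H : SimpleGraph V) : Prop :=
  ∃ f : Fin 4 ↪ V,
    Relation.ReflTransGen SubdivStep
      (SimpleGraph.fromEdgeSet {s | ∃ i j : Fin 4, i ≠ j ∧ s = s(f i, f j)}) H

section Foundations

open Set

variable {M : Matroid α} {C D I X U V : Set α} {e : α}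

/-- The key non-degeneracy predicate: `M` is not a direct sum of two nonempty matroids. -/
def Good (M : Matroid α) : Prop :=
  ¬ ∃ M1 M2 : Matroid α, M1.E.Nonempty ∧ M2.E.Nonempty ∧ IsDirSumOf M M1 M2

lemma IsCircuit.dep (h : IsCircuit M C) : M.Dep C := h.1

lemma IsCircuit.subset_ground (h : IsCircuit M C) : C ⊆ M.E := h.1.2

lemma IsCircuit.not_indep (h : IsCircuit M C) : ¬ M.Indep C := h.1.1

lemma IsCircuit.ssubset_indep (h : IsCircuit M C) (hD : D ⊂ C) : M.Indep D := h.2 D hD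

lemma IsCircuit.nonempty (h : IsCircuit M C) : C.Nonempty := by
  rw [Set.nonempty_iff_ne_empty]
  rintro rfl
  exact h.not_indep M.empty_indep

lemma indep_no_circuit (hI : M.Indep I) (hCI : C ⊆ I) (hC : IsCircuit M C) : False :=
  hC.not_indep (hI.subset hCI)

lemma exists_circuit_of_dep (hD : M.Dep D) : ∃ C, C ⊆ D ∧ IsCircuit M C := by
  obtain ⟨I, hI⟩ := M.exists_isBasis D hD.subset_ground
  have hIndep := hI.indep
  have hID : I ⊆ D := hI.subset
  have hne : ¬ D ⊆ I := fun h => hD.not_indep (hIndep.subset h)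
  obtain ⟨x, hxD, hxI⟩ := Set.not_subset.1 hne
  have hxcl : x ∈ M.closure I := hI.subset_closure hxD
  set F : Set (Set α) := {J | J ⊆ I ∧ x ∈ M.closure J} with hF
  have hFne : F.Nonempty := ⟨I, Set.Subset.rfl, hxcl⟩
  set K := ⋂₀ F with hK
  have hKI : K ⊆ I := Set.sInter_subset_of_mem (show I ∈ F from ⟨Set.Subset.rfl, hxcl⟩)
  have hKcl : x ∈ M.closure K := by
    rw [hK, hIndep.closure_sInter_eq_biInter_closure_of_forall_subset hFne (fun J hJ => hJ.1)]
    exact Set.mem_iInter₂.2 fun J hJ => hJ.2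
  have hxE : x ∈ M.E := hD.subset_ground hxD
  have hxK : x ∉ K := fun h => hxI (hKI h)
  have hKind : M.Indep K := hIndep.subset hKI
  refine ⟨insert x K, Set.insert_subset hxD (hKI.trans hID), ⟨⟨?_, ?_⟩, ?_⟩⟩
  · intro hind
    have := hind.notMem_closure_diff_of_mem (Set.mem_insert x K)
    rw [Set.insert_diff_self_of_notMem hxK] at this
    exact this hKcl
  · exact Set.insert_subset hxE (hKI.trans (hID.trans hD.subset_ground))
  · intro D' hD'
    obtain ⟨z, hzC, hzD'⟩ := Set.exists_of_ssubset hD'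
    by_cases hz : z = x
    · subst hz
      have : D' ⊆ K := fun y hy => by
        rcases Set.mem_insert_iff.1 (hD'.1 hy) with rfl | h
        · exact absurd hy hzD'
        · exact h
      exact hKind.subset this
    · have hzK : z ∈ K := by
        rcases Set.mem_insert_iff.1 hzC with rfl | h
        · exact absurd rfl hz
        · exact h
      have hsub : D' ⊆ insert x (K \ {z}) := by
        intro y hy
        rcases Set.mem_insert_iff.1 (hD'.1 hy) with rfl | h
        · exact Set.mem_insert _ _
        · exact Set.mem_insert_of_mem _ ⟨h, fun h' => hzD' (h' ▸ hy)⟩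
      refine Matroid.Indep.subset ?_ hsub
      have hKz : M.Indep (K \ {z}) := hKind.subset Set.diff_subset
      by_contra hdep
      have hxmem : x ∉ K \ {z} := fun h => hxK h.1
      have hx' : x ∈ M.closure (K \ {z}) := by
        by_contra hcl
        exact hdep ((hKz.insert_indep_iff_of_notMem hxmem).2 ⟨hxE, hcl⟩)
      have hmem : K \ {z} ∈ F := ⟨Set.diff_subset.trans hKI, hx'⟩
      have : K ⊆ K \ {z} := Set.sInter_subset_of_mem hmem
      exact (this hzK).2 rfl

lemma indep_iff_no_circuit (hIE : I ⊆ M.E) :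
    M.Indep I ↔ ∀ C, C ⊆ I → ¬ IsCircuit M C := by
  constructor
  · intro h C hCI hC
    exact hC.not_indep (h.subset hCI)
  · intro h
    by_contra hni
    obtain ⟨C, hCI, hC⟩ := exists_circuit_of_dep ⟨hni, hIE⟩
    exact h C hCI hC

lemma eq_of_circuit_iff {M N : Matroid α} (hE : M.E = N.E)
    (h : ∀ C, IsCircuit M C ↔ IsCircuit N C) : M = N := by
  refine Matroid.ext_indep hE fun I hIE => ?_
  rw [indep_iff_no_circuit hIE, indep_iff_no_circuit (hE ▸ hIE)]
  exact ⟨fun h' C hc hC => h' C hc ((h C).2 hC), fun h' C hc hC => h' C hc ((h C).1 hC)⟩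

lemma restrict_circuit_iff (hX : X ⊆ M.E) :
    IsCircuit (M.restrict X) C ↔ IsCircuit M C ∧ C ⊆ X := by
  constructor
  · rintro ⟨⟨hni, hCX⟩, hmin⟩
    rw [Matroid.restrict_ground_eq] at hCX
    refine ⟨⟨⟨fun hi => hni (Matroid.restrict_indep_iff.2 ⟨hi, hCX⟩), hCX.trans hX⟩,
      fun D hD => (Matroid.restrict_indep_iff.1 (hmin D hD)).1⟩, hCX⟩
  · rintro ⟨⟨⟨hni, hCE⟩, hmin⟩, hCX⟩
    refine ⟨⟨fun hi => hni (Matroid.restrict_indep_iff.1 hi).1,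
      by rwa [Matroid.restrict_ground_eq]⟩,
      fun D hD => Matroid.restrict_indep_iff.2 ⟨hmin D hD, hD.1.trans hCX⟩⟩

end Foundations
section Foundations2

open Set

variable {M M1 M2 : Matroid α} {C D I X U V : Set α} {e a b f : α}

lemma circuit_disjointSum_of_left (hdj : Disjoint M1.E M2.E) (hC : IsCircuit M1 C) :
    IsCircuit (M1.disjointSum M2 hdj) C := by
  have hC1 : C ⊆ M1.E := hC.subset_ground
  refine ⟨⟨?_, by rw [Matroid.disjointSum_ground_eq]; exact hC1.trans Set.subset_union_left⟩,
    fun D hD => ?_⟩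
  · intro hind
    rw [Matroid.disjointSum_indep_iff] at hind
    exact hC.not_indep ((Set.inter_eq_self_of_subset_left hC1) ▸ hind.1)
  · rw [Matroid.disjointSum_indep_iff]
    have hD1 : D ⊆ M1.E := hD.1.trans hC1
    have hD2 : D ∩ M2.E = ∅ := by
      apply Set.eq_empty_of_subset_empty
      intro y hy
      exact (Set.disjoint_left.1 hdj (hD1 hy.1) hy.2).elim
    refine ⟨?_, ?_, hD1.trans Set.subset_union_left⟩
    · rw [Set.inter_eq_self_of_subset_left hD1]
      exact hC.ssubset_indep hD
    · rw [hD2]; exact M2.empty_indep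

lemma circuit_disjointSum_of_right (hdj : Disjoint M1.E M2.E) (hC : IsCircuit M2 C) :
    IsCircuit (M1.disjointSum M2 hdj) C := by
  have hC2 : C ⊆ M2.E := hC.subset_ground
  refine ⟨⟨?_, by rw [Matroid.disjointSum_ground_eq]; exact hC2.trans Set.subset_union_right⟩,
    fun D hD => ?_⟩
  · intro hind
    rw [Matroid.disjointSum_indep_iff] at hind
    exact hC.not_indep ((Set.inter_eq_self_of_subset_left hC2) ▸ hind.2.1)
  · rw [Matroid.disjointSum_indep_iff]
    have hD2 : D ⊆ M2.E := hD.1.trans hC2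
    have hD1 : D ∩ M1.E = ∅ := by
      apply Set.eq_empty_of_subset_empty
      intro y hy
      exact (Set.disjoint_right.1 hdj (hD2 hy.1) hy.2).elim
    refine ⟨?_, ?_, hD2.trans Set.subset_union_right⟩
    · rw [hD1]; exact M1.empty_indep
    · rw [Set.inter_eq_self_of_subset_left hD2]
      exact hC.ssubset_indep hD

lemma disjointSum_circuit_iff (hdj : Disjoint M1.E M2.E) :
    IsCircuit (M1.disjointSum M2 hdj) C ↔ IsCircuit M1 C ∨ IsCircuit M2 C := by
  constructor
  · rintro ⟨⟨hni, hCE⟩, hmin⟩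
    rw [Matroid.disjointSum_ground_eq] at hCE
    have h12 : ¬ M1.Indep (C ∩ M1.E) ∨ ¬ M2.Indep (C ∩ M2.E) := by
      by_contra h
      push_neg at h
      exact hni (Matroid.disjointSum_indep_iff.2 ⟨h.1, h.2, hCE⟩)
    rcases h12 with h | h
    · left
      have hCsub : C ⊆ M1.E := by
        by_contra hsub
        obtain ⟨y, hyC, hyN⟩ := Set.not_subset.1 hsub
        have hss : C ∩ M1.E ⊂ C := ⟨Set.inter_subset_left, fun hs => hyN (hs hyC).2⟩
        have hind := hmin _ hss
        rw [Matroid.disjointSum_indep_iff] at hind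
        have he : C ∩ M1.E ∩ M1.E = C ∩ M1.E := by rw [Set.inter_assoc, Set.inter_self]
        exact h (he ▸ hind.1)
      have hCeq : C ∩ M1.E = C := Set.inter_eq_self_of_subset_left hCsub
      refine ⟨⟨hCeq ▸ h, hCsub⟩, fun D hD => ?_⟩
      have hind := hmin D hD
      rw [Matroid.disjointSum_indep_iff] at hind
      have he : D ∩ M1.E = D := Set.inter_eq_self_of_subset_left (hD.1.trans hCsub)
      exact he ▸ hind.1
    · right
      have hCsub : C ⊆ M2.E := by
        by_contra hsub
        obtain ⟨y, hyC, hyN⟩ := Set.not_subset.1 hsub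
        have hss : C ∩ M2.E ⊂ C := ⟨Set.inter_subset_left, fun hs => hyN (hs hyC).2⟩
        have hind := hmin _ hss
        rw [Matroid.disjointSum_indep_iff] at hind
        have he : C ∩ M2.E ∩ M2.E = C ∩ M2.E := by rw [Set.inter_assoc, Set.inter_self]
        exact h (he ▸ hind.2.1)
      have hCeq : C ∩ M2.E = C := Set.inter_eq_self_of_subset_left hCsub
      refine ⟨⟨hCeq ▸ h, hCsub⟩, fun D hD => ?_⟩
      have hind := hmin D hD
      rw [Matroid.disjointSum_indep_iff] at hind
      have he : D ∩ M2.E = D := Set.inter_eq_self_of_subset_left (hD.1.trans hCsub)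
      exact he ▸ hind.2.1
  · rintro (h | h)
    · exact circuit_disjointSum_of_left hdj h
    · exact circuit_disjointSum_of_right hdj h

/-- If the circuits of `M` split across a partition of the ground set,
then `M` is the direct sum of the two restrictions. -/
lemma eq_disjointSum_of_split (hdj : Disjoint U V) (hUV : U ∪ V = M.E)
    (hsplit : ∀ C, IsCircuit M C → C ⊆ U ∨ C ⊆ V) :
    IsDirSumOf M (M.restrict U) (M.restrict V) := by
  have hUE : U ⊆ M.E := hUV ▸ Set.subset_union_left
  have hVE : V ⊆ M.E := hUV ▸ Set.subset_union_right
  refine ⟨by simpa using hdj, ?_⟩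
  refine Matroid.ext_indep (by simp [hUV]) fun I hIE => ?_
  rw [Matroid.disjointSum_indep_iff]
  simp only [Matroid.restrict_indep_iff, Matroid.restrict_ground_eq]
  constructor
  · intro h
    exact ⟨⟨h.subset Set.inter_subset_left, Set.inter_subset_right⟩,
      ⟨h.subset Set.inter_subset_left, Set.inter_subset_right⟩, hUV ▸ hIE⟩
  · rintro ⟨⟨h1, -⟩, ⟨h2, -⟩, hsub⟩
    rw [indep_iff_no_circuit hIE]
    intro C hCI hC
    rcases hsplit C hC with h | h
    · exact indep_no_circuit h1 (Set.subset_inter hCI h) hC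
    · exact indep_no_circuit h2 (Set.subset_inter hCI h) hC

lemma not_good_of_split (hU : U.Nonempty) (hV : V.Nonempty)
    (hdj : Disjoint U V) (hUV : U ∪ V = M.E)
    (hsplit : ∀ C, IsCircuit M C → C ⊆ U ∨ C ⊆ V) : ¬ Good M := fun hG =>
  hG ⟨M.restrict U, M.restrict V, by simpa using hU, by simpa using hV,
    eq_disjointSum_of_split hdj hUV hsplit⟩

lemma singleton_circuit_of_not_indep (heE : e ∈ M.E) (h : ¬ M.Indep {e}) :
    IsCircuit M {e} := by
  refine ⟨⟨h, Set.singleton_subset_iff.2 heE⟩, fun D hD => ?_⟩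
  rw [Set.ssubset_singleton_iff.1 hD]
  exact M.empty_indep

lemma Simple.no_small_circuit (hs : Simple M) (hC : IsCircuit M C) (h : C ⊆ {a, b}) : False := by
  have h1 : ∀ x ∈ C, x = a ∨ x = b := fun x hx => by
    rcases h hx with rfl | hx'
    · exact Or.inl rfl
    · exact Or.inr (Set.mem_singleton_iff.1 hx')
  by_cases ha : a ∈ C
  · by_cases hb : b ∈ C
    · have hCeq : C = {a, b} := Set.Subset.antisymm h (by
        intro x hx
        rcases Set.mem_insert_iff.1 hx with rfl | hx'
        · exact ha
        · rw [Set.mem_singleton_iff] at hx'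
          exact hx' ▸ hb)
      exact hs.2 a b (hCeq ▸ hC)
    · have hCeq : C = {a} := by
        apply Set.Subset.antisymm
        · intro x hx
          rcases h1 x hx with rfl | rfl
          · exact Set.mem_singleton _
          · exact absurd hx hb
        · exact Set.singleton_subset_iff.2 ha
      apply hs.2 a a
      rw [Set.pair_eq_singleton]
      exact hCeq ▸ hC
  · by_cases hb : b ∈ C
    · have hCeq : C = {b} := by
        apply Set.Subset.antisymm
        · intro x hx
          rcases h1 x hx with rfl | rfl
          · exact absurd hx ha
          · exact Set.mem_singleton _
        · exact Set.singleton_subset_iff.2 hb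
      apply hs.2 b b
      rw [Set.pair_eq_singleton]
      exact hCeq ▸ hC
    · obtain ⟨x, hx⟩ := hC.nonempty
      rcases h1 x hx with rfl | rfl
      · exact ha hx
      · exact hb hx

lemma Simple.no_loop_circuit (hs : Simple M) (hC : IsCircuit M C) (h : C ⊆ {a}) : False :=
  hs.no_small_circuit hC (h.trans (by rw [Set.pair_eq_singleton a]))

lemma Simple.indep_singleton (hs : Simple M) (heE : e ∈ M.E) : M.Indep {e} := by
  by_contra h
  exact hs.no_loop_circuit (singleton_circuit_of_not_indep heE h) Set.Subset.rfl

lemma not_coloop_of_mem_circuit (hC : IsCircuit M C) (he : e ∈ C) : ¬ IsColoop M e := by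
  rintro ⟨heE, hB⟩
  have hss : C \ {e} ⊂ C := ⟨Set.diff_subset, fun h => (h he).2 rfl⟩
  have hI : M.Indep (C \ {e}) := hC.ssubset_indep hss
  obtain ⟨B, hB', hsub⟩ := hI.exists_isBase_superset
  have heB := hB B hB'
  have hCB : C ⊆ B := fun x hx => by
    by_cases hx' : x = e
    · exact hx' ▸ heB
    · exact hsub ⟨hx, hx'⟩
  exact hC.not_indep (hB'.indep.subset hCB)

lemma coloop_of_no_circuit (heE : e ∈ M.E) (hind : M.Indep {e})
    (h : ∀ C, IsCircuit M C → e ∉ C) : IsColoop M e := by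
  refine ⟨heE, fun B hB => ?_⟩
  by_contra heB
  have hdep : M.Dep (insert e B) := hB.insert_dep ⟨heE, heB⟩
  obtain ⟨C, hCsub, hC⟩ := exists_circuit_of_dep hdep
  have heC : e ∈ C := by
    by_contra h'
    refine hC.not_indep (hB.indep.subset fun x hx => ?_)
    rcases Set.mem_insert_iff.1 (hCsub hx) with rfl | hxB
    · exact absurd hx h'
    · exact hxB
  exact h C hC heC

end Foundations2
section Structure

open Set

variable {M P N : Matroid α} {C D I X : Set α} {e a b f : α} {l : List (Matroid α)}

lemma del_ground (M : Matroid α) (X : Set α) : (del M X).E = M.E \ X := rfl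

lemma con_ground (M : Matroid α) (X : Set α) : (con M X).E = M.E \ X := by
  show (del M.dual X).dual.E = _
  rw [Matroid.dual_ground, del_ground, Matroid.dual_ground]

/-- In all degenerate and nondegenerate cases, the parallel connection's ground set
contains both parts (given that the basepoint is in both parts). -/
lemma isParallelConn_ground (h : IsParallelConn M P N e) (hPe : e ∈ P.E) (hNe : e ∈ N.E) :
    P.E ⊆ M.E ∧ N.E ⊆ M.E := by
  unfold IsParallelConn at h
  have hsub : ∀ {A B : Matroid α}, IsDirSumOf M A B → M.E = A.E ∪ B.E := by
    rintro A B ⟨hd, rfl⟩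
    rw [Matroid.disjointSum_ground_eq]
  split_ifs at h with h1 h2 h3 h4
  · rw [hsub h, con_ground]
    refine ⟨subset_union_left, fun x hx => ?_⟩
    by_cases hxe : x = e
    · exact Or.inl (hxe ▸ hPe)
    · exact Or.inr ⟨hx, hxe⟩
  · rw [hsub h, del_ground]
    refine ⟨fun x hx => ?_, subset_union_right⟩
    by_cases hxe : x = e
    · exact Or.inr (hxe ▸ hNe)
    · exact Or.inl ⟨hx, hxe⟩
  · rw [hsub h, con_ground]
    refine ⟨fun x hx => ?_, subset_union_right⟩
    by_cases hxe : x = e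
    · exact Or.inr (hxe ▸ hNe)
    · exact Or.inl ⟨hx, hxe⟩
  · rw [hsub h, del_ground]
    refine ⟨subset_union_left, fun x hx => ?_⟩
    by_cases hxe : x = e
    · exact Or.inl (hxe ▸ hPe)
    · exact Or.inr ⟨hx, hxe⟩
  · rw [h.1]
    exact ⟨subset_union_left, subset_union_right⟩

/-- For a `Good` matroid, the parallel connection of two nontrivial parts is
never degenerate. -/
lemma split_of_isParallelConn (h : IsParallelConn M P N e) (hint : P.E ∩ N.E = {e})
    (hG : Good M) (hPnt : P.E.Nontrivial) (hNnt : N.E.Nontrivial) :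
    HasCircuits M (P.E ∪ N.E) (PConnCircuit P N e) := by
  have he : e ∈ P.E ∩ N.E := by rw [hint]; exact rfl
  obtain ⟨hPe, hNe⟩ := he
  obtain ⟨x, hxN, hxe⟩ := hNnt.exists_ne e
  obtain ⟨y, hyP, hye⟩ := hPnt.exists_ne e
  unfold IsParallelConn at h
  split_ifs at h with h1 h2 h3 h4
  · exact absurd ⟨P, con N {e}, ⟨e, hPe⟩,
      ⟨x, by rw [con_ground]; exact ⟨hxN, hxe⟩⟩, h⟩ hG
  · exact absurd ⟨del P {e}, N, ⟨y, by rw [del_ground]; exact ⟨hyP, hye⟩⟩, ⟨e, hNe⟩, h⟩ hG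
  · exact absurd ⟨con P {e}, N, ⟨y, by rw [con_ground]; exact ⟨hyP, hye⟩⟩, ⟨e, hNe⟩, h⟩ hG
  · exact absurd ⟨P, del N {e}, ⟨e, hPe⟩,
      ⟨x, by rw [del_ground]; exact ⟨hxN, hxe⟩⟩, h⟩ hG
  · exact h

lemma IsIterPConn.ne_nil (h : IsIterPConn M l) : l ≠ [] := by
  induction h with
  | base M => simp
  | step P M N l e hP hint hpc ih => simp

lemma IsIterPConn.ground_subset (h : IsIterPConn M l) : ∀ W ∈ l, W.E ⊆ M.E := by
  induction h with
  | base M => intro W hW; rw [List.mem_singleton] at hW; subst hW; exact Set.Subset.rfl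
  | step P M N l e hP hint hpc ih =>
      have he : e ∈ P.E ∩ N.E := by rw [hint]; exact rfl
      have hg := isParallelConn_ground hpc he.1 he.2
      intro W hW
      rcases List.mem_append.1 hW with hW | hW
      · exact (ih W hW).trans hg.1
      · rw [List.mem_singleton] at hW
        subst hW
        exact hg.2

end Structure
section SplitLemmas

open Set

variable {M P N : Matroid α} {C D C1 C2 : Set α} {e a b f : α}

/-- Abbreviation for the nondegenerate parallel-connection situation. -/
def SplitAt (M P N : Matroid α) (e : α) : Prop :=
  HasCircuits M (P.E ∪ N.E) (PConnCircuit P N e) ∧ P.E ∩ N.E = {e}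

namespace SplitAt

variable (hsp : SplitAt M P N e)
include hsp

lemma ground : M.E = P.E ∪ N.E := hsp.1.1

lemma basepoint_mem : e ∈ P.E ∧ e ∈ N.E := by
  have : e ∈ P.E ∩ N.E := by rw [hsp.2]; exact rfl
  exact ⟨this.1, this.2⟩

lemma P_subset : P.E ⊆ M.E := by rw [hsp.ground]; exact subset_union_left

lemma N_subset : N.E ⊆ M.E := by rw [hsp.ground]; exact subset_union_right

lemma circuit_P (h : IsCircuit P C) : IsCircuit M C := (hsp.1.2 C).2 (Or.inl h)

lemma circuit_N (h : IsCircuit N C) : IsCircuit M C := (hsp.1.2 C).2 (Or.inr (Or.inl h))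

lemma circuit_cross (h1 : IsCircuit P C1) (h2 : IsCircuit N C2) (he1 : e ∈ C1) (he2 : e ∈ C2) :
    IsCircuit M ((C1 ∪ C2) \ {e}) :=
  (hsp.1.2 _).2 (Or.inr (Or.inr ⟨C1, C2, h1, h2, he1, he2, rfl⟩))

lemma classify (h : IsCircuit M C) : PConnCircuit P N e C := (hsp.1.2 C).1 h

lemma circuit_of_subset_P (hs : Simple M) (h : IsCircuit M C) (hCP : C ⊆ P.E) :
    IsCircuit P C := by
  rcases hsp.classify h with hc | hc | ⟨C1, C2, hC1, hC2, he1, he2, rfl⟩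
  · exact hc
  · have : C ⊆ {e} := by
      rw [← hsp.2]
      exact Set.subset_inter hCP hc.subset_ground
    exact absurd this (fun hsub => hs.no_loop_circuit h hsub)
  · exfalso
    have hsub : C2 ⊆ {e} := by
      intro x hx
      by_cases hxe : x = e
      · exact hxe ▸ rfl
      · have hxC : x ∈ (C1 ∪ C2) \ {e} := ⟨Or.inr hx, hxe⟩
        have : x ∈ P.E ∩ N.E := ⟨hCP hxC, hC2.subset_ground hx⟩
        rw [hsp.2] at this
        exact absurd this hxe
    exact hs.no_loop_circuit (hsp.circuit_N hC2) hsub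

lemma circuit_of_subset_N (hs : Simple M) (h : IsCircuit M C) (hCN : C ⊆ N.E) :
    IsCircuit N C := by
  rcases hsp.classify h with hc | hc | ⟨C1, C2, hC1, hC2, he1, he2, rfl⟩
  · have : C ⊆ {e} := by
      rw [← hsp.2]
      exact Set.subset_inter hc.subset_ground hCN
    exact absurd this (fun hsub => hs.no_loop_circuit h hsub)
  · exact hc
  · exfalso
    have hsub : C1 ⊆ {e} := by
      intro x hx
      by_cases hxe : x = e
      · exact hxe ▸ rfl
      · have hxC : x ∈ (C1 ∪ C2) \ {e} := ⟨Or.inl hx, hxe⟩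
        have : x ∈ P.E ∩ N.E := ⟨hC1.subset_ground hx, hCN hxC⟩
        rw [hsp.2] at this
        exact absurd this hxe
    exact hs.no_loop_circuit (hsp.circuit_P hC1) hsub

lemma circuit_P_iff (hs : Simple M) : IsCircuit P C ↔ IsCircuit M C ∧ C ⊆ P.E :=
  ⟨fun h => ⟨hsp.circuit_P h, h.subset_ground⟩, fun h => hsp.circuit_of_subset_P hs h.1 h.2⟩

lemma circuit_N_iff (hs : Simple M) : IsCircuit N C ↔ IsCircuit M C ∧ C ⊆ N.E :=
  ⟨fun h => ⟨hsp.circuit_N h, h.subset_ground⟩, fun h => hsp.circuit_of_subset_N hs h.1 h.2⟩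

lemma P_eq (hs : Simple M) : P = M.restrict P.E := by
  refine eq_of_circuit_iff (by rw [Matroid.restrict_ground_eq]) fun C => ?_
  rw [restrict_circuit_iff hsp.P_subset, hsp.circuit_P_iff hs]

lemma N_eq (hs : Simple M) : N = M.restrict N.E := by
  refine eq_of_circuit_iff (by rw [Matroid.restrict_ground_eq]) fun C => ?_
  rw [restrict_circuit_iff hsp.N_subset, hsp.circuit_N_iff hs]

lemma simple_P (hs : Simple M) : Simple P := by
  constructor
  · rintro x ⟨hxE, hxi⟩
    exact hs.no_loop_circuit (hsp.circuit_P (singleton_circuit_of_not_indep hxE hxi))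
      Set.Subset.rfl
  · intro x y h
    exact hs.no_small_circuit (hsp.circuit_P h) Set.Subset.rfl

lemma simple_N (hs : Simple M) : Simple N := by
  constructor
  · rintro x ⟨hxE, hxi⟩
    exact hs.no_loop_circuit (hsp.circuit_N (singleton_circuit_of_not_indep hxE hxi))
      Set.Subset.rfl
  · intro x y h
    exact hs.no_small_circuit (hsp.circuit_N h) Set.Subset.rfl

end SplitAt

end SplitLemmas
section SplitLemmas2

open Set

variable {M P N : Matroid α} {C D C1 C2 U V : Set α} {e a b f : α}

lemma pconnCircuit_symm (h : PConnCircuit P N e C) : PConnCircuit N P e C := by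
  rcases h with h | h | ⟨C1, C2, h1, h2, he1, he2, rfl⟩
  · exact Or.inr (Or.inl h)
  · exact Or.inl h
  · exact Or.inr (Or.inr ⟨C2, C1, h2, h1, he2, he1, by rw [Set.union_comm]⟩)

lemma SplitAt.symm (hsp : SplitAt M P N e) : SplitAt M N P e := by
  refine ⟨⟨by rw [hsp.ground, Set.union_comm], fun C => ?_⟩, by rw [← hsp.2, Set.inter_comm]⟩
  rw [hsp.1.2 C]
  exact ⟨pconnCircuit_symm, pconnCircuit_symm⟩

lemma SplitAt.good_P (hsp : SplitAt M P N e) (hG : Good M) : Good P := by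
  rintro ⟨A, B, hA, hB, hdj, heq⟩
  have hPC : ∀ C, IsCircuit P C ↔ (IsCircuit A C ∨ IsCircuit B C) := by
    intro C
    rw [heq]
    exact disjointSum_circuit_iff hdj
  have hPE : P.E = A.E ∪ B.E := by rw [heq, Matroid.disjointSum_ground_eq]
  have hePE := hsp.basepoint_mem.1
  rw [hPE] at hePE
  rcases hePE with he | he
  · refine not_good_of_split (M := M) (U := A.E ∪ N.E) (V := B.E)
      ⟨e, Or.inl he⟩ hB ?_ ?_ ?_ hG
    · rw [Set.disjoint_union_left]
      refine ⟨hdj, Set.disjoint_left.2 fun x hxN hxB => ?_⟩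
      have : x ∈ P.E ∩ N.E := ⟨hPE ▸ Or.inr hxB, hxN⟩
      rw [hsp.2] at this
      exact Set.disjoint_left.1 hdj (this ▸ he) hxB
    · rw [hsp.ground, hPE]
      simp only [Set.union_comm, Set.union_assoc, Set.union_left_comm]
    · intro C hC
      rcases hsp.classify hC with hc | hc | ⟨C1, C2, hC1, hC2, he1, he2, rfl⟩
      · rcases (hPC C).1 hc with h | h
        · exact Or.inl (h.subset_ground.trans Set.subset_union_left)
        · exact Or.inr h.subset_ground
      · exact Or.inl (hc.subset_ground.trans Set.subset_union_right)
      · rcases (hPC C1).1 hC1 with h | h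
        · refine Or.inl fun x hx => ?_
          rcases hx.1 with hx1 | hx2
          · exact Or.inl (h.subset_ground hx1)
          · exact Or.inr (hC2.subset_ground hx2)
        · exact absurd (h.subset_ground he1) (Set.disjoint_left.1 hdj he)
  · refine not_good_of_split (M := M) (U := B.E ∪ N.E) (V := A.E)
      ⟨e, Or.inl he⟩ hA ?_ ?_ ?_ hG
    · rw [Set.disjoint_union_left]
      refine ⟨hdj.symm, Set.disjoint_left.2 fun x hxN hxA => ?_⟩
      have : x ∈ P.E ∩ N.E := ⟨hPE ▸ Or.inl hxA, hxN⟩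
      rw [hsp.2] at this
      exact Set.disjoint_left.1 hdj.symm (this ▸ he) hxA
    · rw [hsp.ground, hPE]
      simp only [Set.union_comm, Set.union_assoc, Set.union_left_comm]
    · intro C hC
      rcases hsp.classify hC with hc | hc | ⟨C1, C2, hC1, hC2, he1, he2, rfl⟩
      · rcases (hPC C).1 hc with h | h
        · exact Or.inr h.subset_ground
        · exact Or.inl (h.subset_ground.trans Set.subset_union_left)
      · exact Or.inl (hc.subset_ground.trans Set.subset_union_right)
      · rcases (hPC C1).1 hC1 with h | h
        · exact absurd (h.subset_ground he1) (Set.disjoint_left.1 hdj.symm he)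
        · refine Or.inl fun x hx => ?_
          rcases hx.1 with hx1 | hx2
          · exact Or.inl (h.subset_ground hx1)
          · exact Or.inr (hC2.subset_ground hx2)

lemma SplitAt.good_N (hsp : SplitAt M P N e) (hG : Good M) : Good N :=
  hsp.symm.good_P hG

lemma SplitAt.exists_circuit_P (hsp : SplitAt M P N e) (hG : Good M)
    (hPnt : P.E.Nontrivial) : ∃ C, IsCircuit P C ∧ e ∈ C := by
  by_contra hno
  push_neg at hno
  obtain ⟨y, hy, hye⟩ := hPnt.exists_ne e
  refine not_good_of_split (M := M) (U := P.E \ {e}) (V := N.E)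
    ⟨y, hy, hye⟩ ⟨e, hsp.basepoint_mem.2⟩ ?_ ?_ ?_ hG
  · refine Set.disjoint_left.2 fun x hxP hxN => ?_
    have : x ∈ P.E ∩ N.E := ⟨hxP.1, hxN⟩
    rw [hsp.2] at this
    exact hxP.2 this
  · rw [hsp.ground]
    apply Set.Subset.antisymm
    · exact Set.union_subset (Set.diff_subset.trans Set.subset_union_left) Set.subset_union_right
    · rintro x (hx | hx)
      · by_cases hxe : x = e
        · exact Or.inr (hxe ▸ hsp.basepoint_mem.2)
        · exact Or.inl ⟨hx, hxe⟩
      · exact Or.inr hx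
  · intro C hC
    rcases hsp.classify hC with hc | hc | ⟨C1, C2, hC1, hC2, he1, he2, rfl⟩
    · exact Or.inl (Set.subset_diff_singleton hc.subset_ground (hno C hc))
    · exact Or.inr hc.subset_ground
    · exact absurd he1 (hno C1 hC1)

lemma SplitAt.exists_circuit_N (hsp : SplitAt M P N e) (hG : Good M)
    (hNnt : N.E.Nontrivial) : ∃ C, IsCircuit N C ∧ e ∈ C :=
  hsp.symm.exists_circuit_P hG hNnt

lemma SplitAt.isParallelConn (hsp : SplitAt M P N e) (hs : Simple M) (hG : Good M)
    (hPnt : P.E.Nontrivial) (hNnt : N.E.Nontrivial) : IsParallelConn M P N e := by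
  have h1 : ¬ IsLoop P e := fun ⟨hE, hi⟩ =>
    hs.no_loop_circuit (hsp.circuit_P (singleton_circuit_of_not_indep hE hi)) Set.Subset.rfl
  have h2 : ¬ IsColoop P e := by
    obtain ⟨C, hC, heC⟩ := hsp.exists_circuit_P hG hPnt
    exact not_coloop_of_mem_circuit hC heC
  have h3 : ¬ IsLoop N e := fun ⟨hE, hi⟩ =>
    hs.no_loop_circuit (hsp.circuit_N (singleton_circuit_of_not_indep hE hi)) Set.Subset.rfl
  have h4 : ¬ IsColoop N e := by
    obtain ⟨C, hC, heC⟩ := hsp.exists_circuit_N hG hNnt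
    exact not_coloop_of_mem_circuit hC heC
  unfold IsParallelConn
  rw [if_neg h1, if_neg h2, if_neg h3, if_neg h4]
  exact hsp.1

lemma splitAt_of_isParallelConn (h : IsParallelConn M P N e) (hint : P.E ∩ N.E = {e})
    (hG : Good M) (hPnt : P.E.Nontrivial) (hNnt : N.E.Nontrivial) : SplitAt M P N e :=
  ⟨split_of_isParallelConn h hint hG hPnt hNnt, hint⟩

/-- A loopless matroid whose circuits split across a partition (with a nontrivial side)
is parallel reducible. -/
lemma not_irreducible_of_split {W : Matroid α}
    (hloop : ∀ x, ¬ IsCircuit W {x})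
    (hU : U.Nonempty) (hV : V.Nontrivial) (hdj : Disjoint U V) (hUV : U ∪ V = W.E)
    (hsplit : ∀ C, IsCircuit W C → C ⊆ U ∨ C ⊆ V) : ¬ ParallelIrreducible W := by
  obtain ⟨f, hfV⟩ := hV.nonempty
  intro hirr
  have hfE : f ∈ W.E := hUV ▸ Or.inr hfV
  have hfU : f ∉ U := fun h => Set.disjoint_left.1 hdj h hfV
  have hUE : U ⊆ W.E := hUV ▸ Set.subset_union_left
  have hVE : V ⊆ W.E := hUV ▸ Set.subset_union_right
  rcases hirr f hfE with hsing | hnex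
  · obtain ⟨x, hx, y, hy, hxy⟩ := hV
    exact hxy (hsing (hVE hx) (hVE hy))
  · apply hnex
    have hfind : W.Indep {f} := by
      by_contra h
      exact hloop f (singleton_circuit_of_not_indep hfE h)
    have hM1E : insert f U ⊆ W.E := Set.insert_subset hfE hUE
    refine ⟨W.restrict (insert f U), W.restrict V, ?_, ?_, by simpa using hV, ?_⟩
    · rw [Matroid.restrict_ground_eq, Matroid.restrict_ground_eq]
      apply Set.Subset.antisymm
      · rintro x ⟨hx1, hx2⟩
        rcases Set.mem_insert_iff.1 hx1 with rfl | hxU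
        · exact rfl
        · exact absurd hx2 (Set.disjoint_left.1 hdj hxU)
      · exact Set.singleton_subset_iff.2 ⟨Set.mem_insert f U, hfV⟩
    · rw [Matroid.restrict_ground_eq]
      obtain ⟨u, hu⟩ := hU
      exact ⟨f, Set.mem_insert f U, u, Set.mem_insert_of_mem f hu, fun h => hfU (h ▸ hu)⟩
    · have hl1 : ¬ IsLoop (W.restrict (insert f U)) f := by
        rintro ⟨-, hi⟩
        exact hi (Matroid.restrict_indep_iff.2 ⟨hfind, Set.singleton_subset_iff.2 (Set.mem_insert f U)⟩)
      have hc1 : IsColoop (W.restrict (insert f U)) f := by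
        refine coloop_of_no_circuit (by rw [Matroid.restrict_ground_eq]; exact Set.mem_insert f U)
          (Matroid.restrict_indep_iff.2 ⟨hfind, Set.singleton_subset_iff.2 (Set.mem_insert f U)⟩)
          (fun C hC hfC => ?_)
        rw [restrict_circuit_iff hM1E] at hC
        obtain ⟨hCW, hCsub⟩ := hC
        rcases hsplit C hCW with h | h
        · exact hfU (h hfC)
        · have : C ⊆ {f} := by
            intro x hx
            rcases Set.mem_insert_iff.1 (hCsub hx) with rfl | hxU
            · exact rfl
            · exact absurd (h hx) (Set.disjoint_left.1 hdj hxU)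
          have hCf : C = {f} := Set.Subset.antisymm this (Set.singleton_subset_iff.2 hfC)
          exact hloop f (hCf ▸ hCW)
      unfold IsParallelConn
      rw [if_neg hl1, if_pos hc1]
      have hdel : del (W.restrict (insert f U)) {f} = W.restrict U := by
        show (W.restrict (insert f U)).restrict ((W.restrict (insert f U)).E \ {f}) = _
        rw [Matroid.restrict_ground_eq, Set.insert_diff_self_of_notMem hfU,
          W.restrict_restrict_eq (Set.subset_insert f U)]
      rw [hdel]
      exact eq_disjointSum_of_split hdj hUV hsplit

end SplitLemmas2
section TwoSplits

open Set

variable {M P N P2 N2 W M1 M2 : Matroid α} {C D A B S1 S2 Z : Set α} {e e1 e2 g : α}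

lemma SplitAt.P_ground_eq (hsp : SplitAt M P N e) : P.E = (M.E \ N.E) ∪ {e} := by
  apply Set.Subset.antisymm
  · intro x hx
    by_cases hxN : x ∈ N.E
    · have : x ∈ P.E ∩ N.E := ⟨hx, hxN⟩
      rw [hsp.2] at this
      exact Or.inr this
    · exact Or.inl ⟨hsp.P_subset hx, hxN⟩
  · rintro x (hx | hx)
    · rw [hsp.ground] at hx
      rcases hx.1 with h | h
      · exact h
      · exact absurd h hx.2
    · exact hx ▸ hsp.basepoint_mem.1

/-- Generic construction of a nondegenerate split of a restriction `W = M|Z` from a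
classification of the `M`-circuits inside `Z`. -/
lemma splitAt_restrict (hZ : Z ⊆ M.E) (hW : W = M.restrict Z)
    (hS1 : S1 ⊆ Z) (hS2 : S2 ⊆ Z)
    (hunion : S1 ∪ S2 = Z) (hinter : S1 ∩ S2 = {g})
    (hfwd : ∀ C, IsCircuit M C → C ⊆ Z → (C ⊆ S1 ∨ C ⊆ S2 ∨
      ∃ A B, IsCircuit M A ∧ A ⊆ S1 ∧ IsCircuit M B ∧ B ⊆ S2 ∧ g ∈ A ∧ g ∈ B ∧
        C = (A ∪ B) \ {g}))
    (hbwd : ∀ A B, IsCircuit M A → A ⊆ S1 → IsCircuit M B → B ⊆ S2 → g ∈ A → g ∈ B →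
      IsCircuit M ((A ∪ B) \ {g})) :
    SplitAt W (M.restrict S1) (M.restrict S2) g := by
  have hS1E : S1 ⊆ M.E := hS1.trans hZ
  have hS2E : S2 ⊆ M.E := hS2.trans hZ
  constructor
  · constructor
    · rw [hW, Matroid.restrict_ground_eq, Matroid.restrict_ground_eq,
        Matroid.restrict_ground_eq, hunion]
    · intro C
      rw [hW, restrict_circuit_iff hZ]
      constructor
      · rintro ⟨hC, hCZ⟩
        rcases hfwd C hC hCZ with h | h | ⟨A, B, hA, hAS, hB, hBS, hgA, hgB, rfl⟩
        · exact Or.inl ((restrict_circuit_iff hS1E).2 ⟨hC, h⟩)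
        · exact Or.inr (Or.inl ((restrict_circuit_iff hS2E).2 ⟨hC, h⟩))
        · exact Or.inr (Or.inr ⟨A, B, (restrict_circuit_iff hS1E).2 ⟨hA, hAS⟩,
            (restrict_circuit_iff hS2E).2 ⟨hB, hBS⟩, hgA, hgB, rfl⟩)
      · rintro (h | h | ⟨A, B, hA, hB, hgA, hgB, rfl⟩)
        · obtain ⟨hC, hCS⟩ := (restrict_circuit_iff hS1E).1 h
          exact ⟨hC, hCS.trans hS1⟩
        · obtain ⟨hC, hCS⟩ := (restrict_circuit_iff hS2E).1 h
          exact ⟨hC, hCS.trans hS2⟩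
        · obtain ⟨hA', hAS⟩ := (restrict_circuit_iff hS1E).1 hA
          obtain ⟨hB', hBS⟩ := (restrict_circuit_iff hS2E).1 hB
          refine ⟨hbwd A B hA' hAS hB' hBS hgA hgB, ?_⟩
          intro x hx
          rcases hx.1 with h' | h'
          · exact hS1 (hAS h')
          · exact hS2 (hBS h')
  · rw [Matroid.restrict_ground_eq, Matroid.restrict_ground_eq, hinter]

lemma not_irreducible_of_splitAt (hsp : SplitAt W M1 M2 g)
    (hs : Simple W) (hG : Good W) (h1 : M1.E.Nontrivial) (h2 : M2.E.Nontrivial) :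
    ¬ ParallelIrreducible W := by
  intro hirr
  have hgE : g ∈ W.E := hsp.P_subset hsp.basepoint_mem.1
  rcases hirr g hgE with hsub | hnex
  · exact ((h2.mono hsp.N_subset).not_subsingleton) hsub
  · exact hnex ⟨M1, M2, hsp.2, h1, h2, hsp.isParallelConn hs hG h1 h2⟩

/-- Two splits with the same `N`-side ground set have the same basepoint and the
same `P`-side. -/
lemma splitAt_same (hsp1 : SplitAt M P N e1) (hsp2 : SplitAt M P2 N2 e2)
    (hs : Simple M) (hG : Good M) (hPnt : P.E.Nontrivial)
    (hXY : N.E = N2.E) : e1 = e2 ∧ P = P2 := by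
  have he12 : e1 = e2 := by
    by_contra hne
    obtain ⟨C1, hC1, he1C⟩ := hsp1.exists_circuit_P hG hPnt
    have hC1M : IsCircuit M C1 := hsp1.circuit_P hC1
    have hC1P : C1 ⊆ P.E := hC1.subset_ground
    rcases hsp2.classify hC1M with hc | hc | ⟨A, B, hA, hB, heA, heB, hCeq⟩
    · have he1P2 : e1 ∈ P2.E := hc.subset_ground he1C
      rw [hsp2.P_ground_eq] at he1P2
      rcases he1P2 with h | h
      · rw [← hXY] at h
        exact h.2 (hsp1.basepoint_mem.2)
      · exact hne h
    · have : C1 ⊆ {e1} := by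
        rw [← hsp1.2]
        exact Set.subset_inter hC1P (hXY ▸ hc.subset_ground)
      exact hs.no_loop_circuit hC1M this
    · have hBsub : B ⊆ {e1, e2} := by
        intro x hx
        by_cases hxe2 : x = e2
        · exact Or.inr hxe2
        · have hxC1 : x ∈ C1 := by
            rw [hCeq]
            exact ⟨Or.inr hx, hxe2⟩
          have : x ∈ P.E ∩ N.E := ⟨hC1P hxC1, hXY ▸ hB.subset_ground hx⟩
          rw [hsp1.2] at this
          exact Or.inl this
      exact hs.no_small_circuit (hsp2.circuit_N hB) hBsub
  have hPE : P.E = P2.E := by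
    rw [hsp1.P_ground_eq, hsp2.P_ground_eq, hXY, he12]
  exact ⟨he12, by rw [hsp1.P_eq hs, hsp2.P_eq hs, hPE]⟩

end TwoSplits
section NestCross

open Set

variable {M P N P2 N2 : Matroid α} {C : Set α} {e1 e2 : α}

lemma no_strict_nest (hsp1 : SplitAt M P N e1) (hsp2 : SplitAt M P2 N2 e2)
    (hs : Simple M) (hG : Good M) (hN2nt : N2.E.Nontrivial)
    (hirrN : ParallelIrreducible N)
    (hYX : N2.E ⊆ N.E) (hne : N2.E ≠ N.E) : False := by
  obtain ⟨x0, hx0X, hx0Y⟩ : (N.E \ N2.E).Nonempty :=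
    Set.diff_nonempty.2 (fun h => hne (Set.Subset.antisymm hYX h))
  have he2X : e2 ∈ N.E := hYX hsp2.basepoint_mem.2
  have hXM : N.E ⊆ M.E := hsp1.N_subset
  have hx0P2 : x0 ∈ P2.E := by
    have h := hXM hx0X
    rw [hsp2.ground] at h
    rcases h with h | h
    · exact h
    · exact absurd h hx0Y
  have hsp' : SplitAt N (M.restrict (N.E ∩ P2.E)) (M.restrict N2.E) e2 := by
    apply splitAt_restrict hXM (hsp1.N_eq hs) Set.inter_subset_left hYX
    · apply Set.Subset.antisymm
      · exact Set.union_subset Set.inter_subset_left hYX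
      · intro x hx
        have hxM := hXM hx
        rw [hsp2.ground] at hxM
        rcases hxM with h | h
        · exact Or.inl ⟨hx, h⟩
        · exact Or.inr h
    · rw [Set.inter_assoc, hsp2.2]
      exact Set.inter_eq_self_of_subset_right (Set.singleton_subset_iff.2 he2X)
    · intro C hC hCX
      rcases hsp2.classify hC with hc | hc | ⟨A, B, hA, hB, heA, heB, rfl⟩
      · exact Or.inl (Set.subset_inter hCX hc.subset_ground)
      · exact Or.inr (Or.inl hc.subset_ground)
      · refine Or.inr (Or.inr ⟨A, B, hsp2.circuit_P hA, ?_, hsp2.circuit_N hB,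
          hB.subset_ground, heA, heB, rfl⟩)
        intro x hxA
        refine ⟨?_, hA.subset_ground hxA⟩
        by_cases hxe : x = e2
        · exact hxe ▸ he2X
        · exact hCX ⟨Or.inl hxA, hxe⟩
    · intro A B hA hAS hB hBS hgA hgB
      exact hsp2.circuit_cross
        (hsp2.circuit_of_subset_P hs hA (hAS.trans Set.inter_subset_right))
        (hsp2.circuit_of_subset_N hs hB hBS) hgA hgB
  refine not_irreducible_of_splitAt hsp' (hsp1.simple_N hs) (hsp1.good_N hG) ?_ ?_ hirrN
  · rw [Matroid.restrict_ground_eq]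
    exact ⟨e2, ⟨he2X, hsp2.basepoint_mem.1⟩, x0, ⟨hx0X, hx0P2⟩,
      fun h => hx0Y (h ▸ hsp2.basepoint_mem.2)⟩
  · rw [Matroid.restrict_ground_eq]
    exact hN2nt

lemma cross_subset (hsp1 : SplitAt M P N e1) (hsp2 : SplitAt M P2 N2 e2)
    (hs : Simple M) (hG : Good M) (hN2nt : N2.E.Nontrivial)
    (hirrN2 : ParallelIrreducible N2) :
    N2.E ⊆ N.E ∨ N2.E ⊆ P.E := by
  by_contra hcon
  push_neg at hcon
  obtain ⟨hnX, hnP⟩ := hcon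
  obtain ⟨y1, hy1Y, hy1P⟩ := Set.not_subset.1 hnP
  obtain ⟨y2, hy2Y, hy2X⟩ := Set.not_subset.1 hnX
  have hYM : N2.E ⊆ M.E := hsp2.N_subset
  have hy1X : y1 ∈ N.E := by
    have h := hYM hy1Y
    rw [hsp1.ground] at h
    rcases h with h | h
    · exact absurd h hy1P
    · exact h
  have hy2P : y2 ∈ P.E := by
    have h := hYM hy2Y
    rw [hsp1.ground] at h
    rcases h with h | h
    · exact h
    · exact absurd h hy2X
  have hy1e : y1 ≠ e1 := fun h => hy1P (h ▸ hsp1.basepoint_mem.1)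
  have hy2e : y2 ≠ e1 := fun h => hy2X (h ▸ hsp1.basepoint_mem.2)
  by_cases he1Y : e1 ∈ N2.E
  · -- `N2` would be reducible at `e1`
    have hinter : (N2.E ∩ P.E) ∩ (N2.E ∩ N.E) = {e1} := by
      have h1 : (N2.E ∩ P.E) ∩ (N2.E ∩ N.E) = N2.E ∩ (P.E ∩ N.E) := by
        ext x
        constructor
        · rintro ⟨⟨h1, h2⟩, ⟨h3, h4⟩⟩
          exact ⟨h1, h2, h4⟩
        · rintro ⟨h1, h2, h3⟩
          exact ⟨⟨h1, h2⟩, ⟨h1, h3⟩⟩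
      rw [h1, hsp1.2]
      exact Set.inter_eq_self_of_subset_right (Set.singleton_subset_iff.2 he1Y)
    have hsp' : SplitAt N2 (M.restrict (N2.E ∩ P.E)) (M.restrict (N2.E ∩ N.E)) e1 := by
      apply splitAt_restrict hYM (hsp2.N_eq hs) Set.inter_subset_left Set.inter_subset_left
      · rw [← Set.inter_union_distrib_left, ← hsp1.ground,
          Set.inter_eq_self_of_subset_left hYM]
      · exact hinter
      · intro C hC hCY
        rcases hsp1.classify hC with hc | hc | ⟨C1, C2, hC1, hC2, he1C1, he1C2, rfl⟩
        · exact Or.inl (Set.subset_inter hCY hc.subset_ground)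
        · exact Or.inr (Or.inl (Set.subset_inter hCY hc.subset_ground))
        · refine Or.inr (Or.inr ⟨C1, C2, hsp1.circuit_P hC1, ?_, hsp1.circuit_N hC2, ?_,
            he1C1, he1C2, rfl⟩)
          · intro x hx
            refine ⟨?_, hC1.subset_ground hx⟩
            by_cases hxe : x = e1
            · exact hxe ▸ he1Y
            · exact hCY ⟨Or.inl hx, hxe⟩
          · intro x hx
            refine ⟨?_, hC2.subset_ground hx⟩
            by_cases hxe : x = e1
            · exact hxe ▸ he1Y
            · exact hCY ⟨Or.inr hx, hxe⟩
      · intro A B hA hAS hB hBS hgA hgB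
        exact hsp1.circuit_cross
          (hsp1.circuit_of_subset_P hs hA (hAS.trans Set.inter_subset_right))
          (hsp1.circuit_of_subset_N hs hB (hBS.trans Set.inter_subset_right)) hgA hgB
    refine not_irreducible_of_splitAt hsp' (hsp2.simple_N hs) (hsp2.good_N hG) ?_ ?_ hirrN2
    · rw [Matroid.restrict_ground_eq]
      exact ⟨e1, ⟨he1Y, hsp1.basepoint_mem.1⟩, y2, ⟨hy2Y, hy2P⟩, fun h => hy2e h.symm⟩
    · rw [Matroid.restrict_ground_eq]
      exact ⟨e1, ⟨he1Y, hsp1.basepoint_mem.2⟩, y1, ⟨hy1Y, hy1X⟩, fun h => hy1e h.symm⟩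
  · by_cases hcross : ∃ C1 C2, IsCircuit P C1 ∧ IsCircuit N C2 ∧ e1 ∈ C1 ∧ e1 ∈ C2 ∧
        (C1 ∪ C2) \ {e1} ⊆ N2.E
    · obtain ⟨C1, C2, hC1, hC2, he1C1, he1C2, hsub⟩ := hcross
      have hC1M := hsp1.circuit_P hC1
      have hC1Ye : C1 ⊆ N2.E ∪ {e1} := fun x hx => by
        by_cases hxe : x = e1
        · exact Or.inr (hxe ▸ rfl)
        · exact Or.inl (hsub ⟨Or.inl hx, hxe⟩)
      rcases hsp2.classify hC1M with hc | hc | ⟨A, B, hA, hB, heA, heB, hCeq⟩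
      · apply hs.no_small_circuit hC1M (a := e2) (b := e1)
        intro x hx
        rcases hC1Ye hx with h | h
        · have hx2 : x ∈ P2.E ∩ N2.E := ⟨hc.subset_ground hx, h⟩
          rw [hsp2.2] at hx2
          exact Or.inl hx2
        · exact Or.inr h
      · exact he1Y (hc.subset_ground he1C1)
      · apply hs.no_small_circuit (hsp2.circuit_P hA) (a := e1) (b := e2)
        intro x hx
        by_cases hxe2 : x = e2
        · exact Or.inr hxe2
        · have hxC1 : x ∈ C1 := by
            rw [hCeq]
            exact ⟨Or.inl hx, hxe2⟩
          rcases hC1Ye hxC1 with h | h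
          · have hx2 : x ∈ P2.E ∩ N2.E := ⟨hA.subset_ground hx, h⟩
            rw [hsp2.2] at hx2
            exact absurd hx2 hxe2
          · exact Or.inl h
    · have hsplitN2 : ∀ C, IsCircuit N2 C → C ⊆ N2.E ∩ P.E ∨ C ⊆ N2.E ∩ N.E := by
        intro C hC
        have hCM := hsp2.circuit_N hC
        have hCY := hC.subset_ground
        rcases hsp1.classify hCM with hc | hc | ⟨C1, C2, hC1, hC2, he1C1, he1C2, rfl⟩
        · exact Or.inl (Set.subset_inter hCY hc.subset_ground)
        · exact Or.inr (Set.subset_inter hCY hc.subset_ground)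
        · exact absurd ⟨C1, C2, hC1, hC2, he1C1, he1C2, hCY⟩ hcross
      have hdj : Disjoint (N2.E ∩ P.E) (N2.E ∩ N.E) := by
        refine Set.disjoint_left.2 fun x hx1 hx2 => ?_
        have hxe : x ∈ P.E ∩ N.E := ⟨hx1.2, hx2.2⟩
        rw [hsp1.2] at hxe
        exact he1Y (hxe ▸ hx1.1)
      have hUV : (N2.E ∩ P.E) ∪ (N2.E ∩ N.E) = N2.E := by
        rw [← Set.inter_union_distrib_left, ← hsp1.ground,
          Set.inter_eq_self_of_subset_left hYM]
      have hUne : (N2.E ∩ P.E).Nonempty := ⟨y2, hy2Y, hy2P⟩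
      have hVne : (N2.E ∩ N.E).Nonempty := ⟨y1, hy1Y, hy1X⟩
      have hsN2 := hsp2.simple_N hs
      have hloopN2 : ∀ x, ¬ IsCircuit N2 {x} := fun x h =>
        hsN2.no_loop_circuit h Set.Subset.rfl
      by_cases hVnt : (N2.E ∩ N.E).Nontrivial
      · exact not_irreducible_of_split hloopN2 hUne hVnt hdj hUV hsplitN2 hirrN2
      by_cases hUnt : (N2.E ∩ P.E).Nontrivial
      · refine not_irreducible_of_split hloopN2 hVne hUnt hdj.symm ?_
          (fun C hC => (hsplitN2 C hC).symm) hirrN2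
        rw [Set.union_comm]
        exact hUV
      · have hU1 : N2.E ∩ P.E = {y2} :=
          (Set.not_nontrivial_iff.1 hUnt).eq_singleton_of_mem ⟨hy2Y, hy2P⟩
        have hV1 : N2.E ∩ N.E = {y1} :=
          (Set.not_nontrivial_iff.1 hVnt).eq_singleton_of_mem ⟨hy1Y, hy1X⟩
        have hnoC : ∀ C, ¬ IsCircuit N2 C := by
          intro C hC
          rcases hsplitN2 C hC with h | h
          · exact hsN2.no_loop_circuit hC (hU1 ▸ h)
          · exact hsN2.no_loop_circuit hC (hV1 ▸ h)
        have hu2 : ∀ u ∈ N2.E, u = e2 := by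
          intro u huY
          have hexC : ∃ C, IsCircuit M C ∧ u ∈ C := by
            by_contra hno
            push_neg at hno
            have huM : u ∈ M.E := hYM huY
            refine not_good_of_split (M := M) (U := {u}) (V := M.E \ {u}) ⟨u, rfl⟩ ?_ ?_ ?_ ?_ hG
            · obtain ⟨z, hz, hzu⟩ := (hN2nt.mono hYM).exists_ne u
              exact ⟨z, hz, hzu⟩
            · exact Set.disjoint_left.2 fun x hx hx2 => hx2.2 hx
            · apply Set.Subset.antisymm
              · exact Set.union_subset (Set.singleton_subset_iff.2 huM) Set.diff_subset
              · intro x hx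
                by_cases hxu : x = u
                · exact Or.inl hxu
                · exact Or.inr ⟨hx, hxu⟩
            · intro C hC
              exact Or.inr (Set.subset_diff_singleton hC.subset_ground (hno C hC))
          obtain ⟨C, hC, huC⟩ := hexC
          rcases hsp2.classify hC with hc | hc | ⟨A, B, hA, hB, heA, heB, rfl⟩
          · have hx2 : u ∈ P2.E ∩ N2.E := ⟨hc.subset_ground huC, huY⟩
            rw [hsp2.2] at hx2
            exact hx2
          · exact absurd hc (hnoC C)
          · exact absurd hB (hnoC B)
        exact hy2X (((hu2 y2 hy2Y).trans (hu2 y1 hy1Y).symm) ▸ hy1X)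

end NestCross
section Peel

open Set

variable {M P N : Matroid α} {e : α} {l : List (Matroid α)}

lemma IsIterPConn.nontrivial_ground (h : IsIterPConn M l)
    (h' : ∀ W ∈ l, W.E.Nontrivial) : M.E.Nontrivial := by
  obtain ⟨W, hW⟩ := List.exists_mem_of_ne_nil l h.ne_nil
  exact (h' W hW).mono (h.ground_subset W hW)

/-- A parallel irreducible simple `Good` matroid admits only the trivial decomposition. -/
lemma irred_single (hs : Simple M) (hG : Good M) (hirr : ParallelIrreducible M)
    (h : IsIterPConn M l) (h' : ∀ W ∈ l, W.E.Nontrivial) : l = [M] := by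
  cases h with
  | base => rfl
  | step P M N l0 e hP hint hpc =>
      exfalso
      have hPnt : P.E.Nontrivial :=
        hP.nontrivial_ground (fun W hW => h' W (List.mem_append_left _ hW))
      have hNnt : N.E.Nontrivial := h' N (List.mem_append_right _ (List.mem_singleton_self N))
      have hsp : SplitAt M P N e := splitAt_of_isParallelConn hpc hint hG hPnt hNnt
      exact not_irreducible_of_splitAt hsp hs hG hPnt hNnt hirr

/-- The peeling lemma: if `M = P(P, N)` is a nondegenerate split with `N` irreducible,
then any iterated decomposition of `M` into nontrivial irreducible components is, up to
permutation, a decomposition of `P` together with `N`. -/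
lemma peel {M : Matroid α} {l : List (Matroid α)} (h : IsIterPConn M l) :
    ∀ {P N : Matroid α} {e1 : α},
    Simple M → Good M → (∀ W ∈ l, W.E.Nontrivial ∧ ParallelIrreducible W) →
    SplitAt M P N e1 → P.E.Nontrivial → N.E.Nontrivial → ParallelIrreducible N →
    ∃ b, IsIterPConn P b ∧ (b ++ [N]).Perm l := by
  induction h with
  | base M' =>
      intro P N e1 hs hG h' hsp1 hPnt hNnt hirrN
      exact absurd (h' M' (List.mem_singleton_self M')).2
        (not_irreducible_of_splitAt hsp1 hs hG hPnt hNnt)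
  | step P2 M' N2 c e2 hP2 hint2 hpc2 ih =>
      intro P N e1 hs hG h' hsp1 hPnt hNnt hirrN
      have h'c : ∀ W ∈ c, W.E.Nontrivial ∧ ParallelIrreducible W :=
        fun W hW => h' W (List.mem_append_left _ hW)
      have hN2 := h' N2 (List.mem_append_right _ (List.mem_singleton_self N2))
      have hP2nt : P2.E.Nontrivial := hP2.nontrivial_ground (fun W hW => (h'c W hW).1)
      have hsp2 : SplitAt M' P2 N2 e2 := splitAt_of_isParallelConn hpc2 hint2 hG hP2nt hN2.1
      by_cases hXY : N.E = N2.E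
      · obtain ⟨he12, hPP2⟩ := splitAt_same hsp1 hsp2 hs hG hPnt hXY
        have hNN2 : N = N2 := by rw [hsp1.N_eq hs, hsp2.N_eq hs, hXY]
        refine ⟨c, by rw [hPP2]; exact hP2, by rw [hNN2]⟩
      · -- the two final components are different; they do not nest or cross
        have hYPE : N2.E ⊆ P.E := by
          rcases cross_subset hsp1 hsp2 hs hG hN2.1 hN2.2 with h | h
          · exact (no_strict_nest hsp1 hsp2 hs hG hN2.1 hirrN h
              (fun hh => hXY hh.symm)).elim
          · exact h
        have hXP2 : N.E ⊆ P2.E := by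
          rcases cross_subset hsp2 hsp1 hs hG hNnt hirrN with h | h
          · exact (no_strict_nest hsp2 hsp1 hs hG hNnt hN2.2 h hXY).elim
          · exact h
        have he1Q : e1 ∈ P.E ∩ P2.E := ⟨hsp1.basepoint_mem.1, hXP2 hsp1.basepoint_mem.2⟩
        have he2Q : e2 ∈ P.E ∩ P2.E := ⟨hYPE hsp2.basepoint_mem.2, hsp2.basepoint_mem.1⟩
        by_cases hQnt : (P.E ∩ P2.E).Nontrivial
        · -- main case: recurse into `P2`
          have hsp2' : SplitAt P2 (M'.restrict (P.E ∩ P2.E)) (M'.restrict N.E) e1 := by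
            apply splitAt_restrict hsp2.P_subset (hsp2.P_eq hs) Set.inter_subset_right hXP2
            · apply Set.Subset.antisymm
              · exact Set.union_subset Set.inter_subset_right hXP2
              · intro x hx
                have hxM : x ∈ M'.E := hsp2.P_subset hx
                rw [hsp1.ground] at hxM
                rcases hxM with h | h
                · exact Or.inl ⟨h, hx⟩
                · exact Or.inr h
            · have hre : (P.E ∩ P2.E) ∩ N.E = (P.E ∩ N.E) ∩ P2.E := by
                ext x
                exact ⟨fun ⟨⟨h1, h2⟩, h3⟩ => ⟨⟨h1, h3⟩, h2⟩, fun ⟨⟨h1, h3⟩, h2⟩ => ⟨⟨h1, h2⟩, h3⟩⟩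
              rw [hre, hsp1.2]
              exact Set.inter_eq_self_of_subset_left
                (Set.singleton_subset_iff.2 (hXP2 hsp1.basepoint_mem.2))
            · intro C hC hCZ
              rcases hsp1.classify hC with hc | hc | ⟨C1, C2, hC1, hC2, he1C1, he1C2, rfl⟩
              · exact Or.inl (Set.subset_inter hc.subset_ground hCZ)
              · exact Or.inr (Or.inl hc.subset_ground)
              · refine Or.inr (Or.inr ⟨C1, C2, hsp1.circuit_P hC1, ?_,
                  hsp1.circuit_N hC2, hC2.subset_ground, he1C1, he1C2, rfl⟩)
                intro x hx
                refine ⟨hC1.subset_ground hx, ?_⟩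
                by_cases hxe : x = e1
                · exact hxe ▸ he1Q.2
                · exact hCZ ⟨Or.inl hx, hxe⟩
            · intro A B hA hAS hB hBS hgA hgB
              exact hsp1.circuit_cross
                (hsp1.circuit_of_subset_P hs hA (hAS.trans Set.inter_subset_left))
                (hsp1.circuit_of_subset_N hs hB hBS) hgA hgB
          obtain ⟨b2, hb2, hperm2⟩ := ih (hsp2.simple_P hs) (hsp2.good_P hG) h'c hsp2'
            (by rw [Matroid.restrict_ground_eq]; exact hQnt)
            (by rw [Matroid.restrict_ground_eq]; exact hNnt)
            (by rw [← hsp1.N_eq hs]; exact hirrN)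
          -- now build the decomposition of `P`
          have hsp1' : SplitAt P (M'.restrict (P.E ∩ P2.E)) (M'.restrict N2.E) e2 := by
            apply splitAt_restrict hsp1.P_subset (hsp1.P_eq hs) Set.inter_subset_left hYPE
            · apply Set.Subset.antisymm
              · exact Set.union_subset Set.inter_subset_left hYPE
              · intro x hx
                have hxM : x ∈ M'.E := hsp1.P_subset hx
                rw [hsp2.ground] at hxM
                rcases hxM with h | h
                · exact Or.inl ⟨hx, h⟩
                · exact Or.inr h
            · have hre : (P.E ∩ P2.E) ∩ N2.E = P.E ∩ (P2.E ∩ N2.E) := by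
                rw [Set.inter_assoc]
              rw [hre, hsp2.2]
              exact Set.inter_eq_self_of_subset_right
                (Set.singleton_subset_iff.2 (hYPE hsp2.basepoint_mem.2))
            · intro C hC hCZ
              rcases hsp2.classify hC with hc | hc | ⟨A, B, hA, hB, heA, heB, rfl⟩
              · exact Or.inl (Set.subset_inter hCZ hc.subset_ground)
              · exact Or.inr (Or.inl hc.subset_ground)
              · refine Or.inr (Or.inr ⟨A, B, hsp2.circuit_P hA, ?_,
                  hsp2.circuit_N hB, hB.subset_ground, heA, heB, rfl⟩)
                intro x hx
                refine ⟨?_, hA.subset_ground hx⟩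
                by_cases hxe : x = e2
                · exact hxe ▸ he2Q.1
                · exact hCZ ⟨Or.inl hx, hxe⟩
            · intro A B hA hAS hB hBS hgA hgB
              exact hsp2.circuit_cross
                (hsp2.circuit_of_subset_P hs hA (hAS.trans Set.inter_subset_right))
                (hsp2.circuit_of_subset_N hs hB hBS) hgA hgB
          rw [← hsp2.N_eq hs] at hsp1'
          have hint' : (M'.restrict (P.E ∩ P2.E)).E ∩ N2.E = {e2} := hsp1'.2
          have hpc' : IsParallelConn P (M'.restrict (P.E ∩ P2.E)) N2 e2 :=
            hsp1'.isParallelConn (hsp1.simple_P hs) (hsp1.good_P hG)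
              (by rw [Matroid.restrict_ground_eq]; exact hQnt) hN2.1
          refine ⟨b2 ++ [N2],
            IsIterPConn.step (M'.restrict (P.E ∩ P2.E)) P N2 b2 e2 hb2 hint' hpc', ?_⟩
          have hperm2' : (b2 ++ [N]).Perm c := by
            rw [hsp1.N_eq hs]
            exact hperm2
          have hswap : ((b2 ++ [N2]) ++ [N]).Perm ((b2 ++ [N]) ++ [N2]) := by
            rw [List.append_assoc, List.append_assoc]
            exact List.Perm.append_left b2 (List.Perm.swap N N2 [])
          exact hswap.trans (hperm2'.append_right [N2])
        · -- degenerate case: the common part is just the basepoint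
          have hQe : P.E ∩ P2.E = {e1} :=
            (Set.not_nontrivial_iff.1 hQnt).eq_singleton_of_mem he1Q
          have he21 : e2 = e1 := by
            have h := he2Q
            rw [hQe] at h
            exact h
          have hP2X : P2.E = N.E := by
            apply Set.Subset.antisymm
            · intro x hx
              have hxM : x ∈ M'.E := hsp2.P_subset hx
              rw [hsp1.ground] at hxM
              rcases hxM with h | h
              · have : x ∈ P.E ∩ P2.E := ⟨h, hx⟩
                rw [hQe] at this
                exact this ▸ hsp1.basepoint_mem.2
              · exact h
            · exact hXP2
          have hP2N : P2 = N := by rw [hsp2.P_eq hs, hsp1.N_eq hs, hP2X]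
          have hc1 : c = [P2] :=
            irred_single (hsp2.simple_P hs) (hsp2.good_P hG)
              (by rw [hP2N]; exact hirrN) hP2 (fun W hW => (h'c W hW).1)
          have hPY : P.E = N2.E := by
            apply Set.Subset.antisymm
            · intro x hx
              have hxM : x ∈ M'.E := hsp1.P_subset hx
              rw [hsp2.ground] at hxM
              rcases hxM with h | h
              · have hxQ : x ∈ P.E ∩ P2.E := ⟨hx, h⟩
                rw [hQe] at hxQ
                have : x = e1 := hxQ
                rw [this, ← he21]
                exact hsp2.basepoint_mem.2
              · exact h
            · exact hYPE
          have hPN2 : P = N2 := by rw [hsp1.P_eq hs, hsp2.N_eq hs, hPY]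
          refine ⟨[N2], (by rw [hPN2]; exact IsIterPConn.base N2), ?_⟩
          rw [hc1, hP2N]
          exact List.Perm.swap N N2 []

end Peel
section Main

open Set

lemma main_perm {M : Matroid α} {l1 : List (Matroid α)} (h1 : IsIterPConn M l1) :
    Simple M → Good M → (∀ W ∈ l1, W.E.Nontrivial ∧ ParallelIrreducible W) →
    ∀ {l2 : List (Matroid α)}, IsIterPConn M l2 →
    (∀ W ∈ l2, W.E.Nontrivial ∧ ParallelIrreducible W) → l1.Perm l2 := by
  induction h1 with
  | base M' =>
      intro hs hG h' l2 h2 h2'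
      rw [irred_single hs hG (h' M' (List.mem_singleton_self M')).2 h2
        (fun W hW => (h2' W hW).1)]
  | step P1 M' N1 a e1 hP1 hint1 hpc1 ih =>
      intro hs hG h' l2 h2 h2'
      have h'a : ∀ W ∈ a, W.E.Nontrivial ∧ ParallelIrreducible W :=
        fun W hW => h' W (List.mem_append_left _ hW)
      have hN1 := h' N1 (List.mem_append_right _ (List.mem_singleton_self N1))
      have hP1nt : P1.E.Nontrivial := hP1.nontrivial_ground (fun W hW => (h'a W hW).1)
      have hsp1 : SplitAt M' P1 N1 e1 := splitAt_of_isParallelConn hpc1 hint1 hG hP1nt hN1.1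
      obtain ⟨b, hb, hperm⟩ := peel h2 hs hG h2' hsp1 hP1nt hN1.1 hN1.2
      have hrec : a.Perm b := ih (hsp1.simple_P hs) (hsp1.good_P hG) h'a hb
        (fun W hW => h2' W (hperm.subset (List.mem_append_left _ hW)))
      exact (hrec.append_right [N1]).trans hperm

end Main

/-- a simple non-trivial connected matroid has a unique (up to permutation)
decomposition as an iterated parallel connection of non-trivial parallel irreducible
matroids. -/
theorem stmt9 (M : Matroid α) (hs : Simple M) (hnt : M.E.Nontrivial) (hconn : Connected M)
    (l1 l2 : List (Matroid α))
    (h1 : IsIterPConn M l1) (h2 : IsIterPConn M l2)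
    (h1' : ∀ N ∈ l1, N.E.Nontrivial ∧ ParallelIrreducible N)
    (h2' : ∀ N ∈ l2, N.E.Nontrivial ∧ ParallelIrreducible N) :
    l1.Perm l2 :=
  main_perm h1 hs hconn.2 h1' h2 h2'

end

end SPPaper
end

section
/- Let M be a loopless connected matroid on ground set E with |E| ≥ 2, and let e ∈ E. Then at least one of M − e and M/e is connected. -/
open Polynomial

namespace SPPaper

noncomputable section
open Classical

universe u
variable {α : Type u} {V : Type u}

section Aux

open Set Matroid

/-- If `M` has a "gluing" partition into `Z` and `M.E \ Z`, both nonempty,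
then `M` is not connected. -/
private lemma glue_not_connected (M : Matroid α) (Z : Set α) (hZE : Z ⊆ M.E)
    (hZ : Z.Nonempty) (hZc : (M.E \ Z).Nonempty)
    (hglue : ∀ I J, M.Indep I → M.Indep J → I ⊆ Z → J ⊆ M.E \ Z → M.Indep (I ∪ J)) :
    ¬ Connected M := by
  rintro ⟨-, hno⟩
  refine hno ⟨M ↾ Z, M ↾ (M.E \ Z), by simpa, by simpa,
    by simpa using Set.disjoint_sdiff_right, ?_⟩
  refine Matroid.ext_indep ?_ ?_
  · simp [Set.union_diff_cancel hZE]
  intro I hIE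
  rw [Matroid.disjointSum_indep_iff]
  simp only [Matroid.restrict_indep_iff, Matroid.restrict_ground_eq]
  have hIZc : I ∩ (M.E \ Z) = I \ Z := by
    ext x
    exact ⟨fun h => ⟨h.1, h.2.2⟩, fun h => ⟨h.1, hIE h.1, h.2⟩⟩
  constructor
  · intro hI
    exact ⟨⟨hI.subset inter_subset_left, inter_subset_right⟩,
      ⟨hI.subset inter_subset_left, inter_subset_right⟩,
      by rw [Set.union_diff_cancel hZE]; exact hIE⟩
  · rintro ⟨⟨h1, -⟩, ⟨h2, -⟩, -⟩
    rw [hIZc] at h2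
    have := hglue _ _ h1 h2 inter_subset_right (by rw [← hIZc]; exact inter_subset_right)
    rwa [Set.inter_union_diff] at this

/-- A disjoint sum glues independent sets from the two parts. -/
private lemma dirSum_glue {N M1 M2 : Matroid α} {h : Disjoint M1.E M2.E}
    (hsum : N = Matroid.disjointSum M1 M2 h) :
    ∀ I J, N.Indep I → N.Indep J → I ⊆ M1.E → J ⊆ M2.E → N.Indep (I ∪ J) := by
  subst hsum
  intro I J hI hJ hI1 hJ2
  rw [Matroid.disjointSum_indep_iff] at hI hJ ⊢
  have e1 : (I ∪ J) ∩ M1.E = I := by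
    rw [union_inter_distrib_right, inter_eq_self_of_subset_left hI1,
      (h.symm.mono_left hJ2).inter_eq, union_empty]
  have e2 : (I ∪ J) ∩ M2.E = J := by
    rw [union_inter_distrib_right, inter_eq_self_of_subset_left hJ2,
      (h.mono_left hI1).inter_eq, empty_union]
  rw [inter_eq_self_of_subset_left hI1] at hI
  rw [inter_eq_self_of_subset_left hJ2] at hJ
  exact ⟨by rw [e1]; exact hI.1, by rw [e2]; exact hJ.2.1,
    union_subset (hI1.trans subset_union_left) (hJ2.trans subset_union_right)⟩

/-- Independence in the contraction `M / e` for a non-loop `e`. -/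
private lemma con_indep_iff {M : Matroid α} {e : α} (hel : M.Indep {e}) {K : Set α} :
    (con M {e}).Indep K ↔ K ⊆ M.E \ {e} ∧ M.Indep (insert e K) := by
  have heE : e ∈ M.E := hel.subset_ground rfl
  have hR : M.E \ {e} ⊆ M✶.E := by rw [Matroid.dual_ground]; exact Set.diff_subset
  rw [con, del, Matroid.dual_ground, Matroid.dual_indep_iff_exists',
    Matroid.restrict_ground_eq]
  constructor
  · rintro ⟨hK, B, hB, hdj⟩
    rw [Matroid.isBase_restrict_iff hR] at hB
    obtain ⟨B0, hB0, heB0⟩ := hel.exists_isBase_superset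
    have hB0c : M✶.IsBase (M.E \ B0) := hB0.compl_isBase_dual
    have hB0cR : M.E \ B0 ⊆ M.E \ {e} :=
      diff_subset_diff_right (by simpa using heB0)
    have hBbase : M✶.IsBase B := by
      apply hB.indep.isBase_of_ground_subset_closure
      rw [hB.closure_eq_closure]
      calc M✶.E = M✶.closure (M.E \ B0) := hB0c.closure_eq.symm
        _ ⊆ M✶.closure (M.E \ {e}) := M✶.closure_subset_closure hB0cR
    have hBc : M.IsBase (M.E \ B) := by
      have := hBbase.compl_isBase_of_dual
      simpa using this
    refine ⟨hK, (hBc.indep.subset ?_)⟩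
    refine insert_subset ⟨heE, fun hcon => (hB.subset hcon).2 rfl⟩ ?_
    intro x hx
    exact ⟨(hK hx).1, fun hxB => (Set.disjoint_left.mp hdj hx hxB)⟩
  · rintro ⟨hK, hind⟩
    obtain ⟨B0, hB0, hsub⟩ := hind.exists_isBase_superset
    refine ⟨hK, M.E \ B0, ?_, ?_⟩
    · rw [Matroid.isBase_restrict_iff hR]
      refine (hB0.compl_isBase_dual).indep.isBasis_of_subset_of_subset_closure ?_ ?_
      · exact diff_subset_diff_right (by simpa using hsub (mem_insert e K))
      · rw [(hB0.compl_isBase_dual).closure_eq]; exact hR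
    · exact Set.disjoint_left.mpr fun x hxK hxB =>
        hxB.2 (hsub (Set.mem_insert_of_mem _ hxK))

/-- If `X, Y` glue in `M` and `e ∈ cl(X)`, then `insert e X, Y` glue in `M`. -/
private lemma glue_extend_del {M : Matroid α} {X Y : Set α} (hXE : X ⊆ M.E)
    (hXY : Disjoint X Y)
    (hglue : ∀ I J, M.Indep I → M.Indep J → I ⊆ X → J ⊆ Y → M.Indep (I ∪ J))
    {e : α} (hecl : e ∈ M.closure X) (heY : e ∉ Y) :
    ∀ I J, M.Indep I → M.Indep J → I ⊆ insert e X → J ⊆ Y → M.Indep (I ∪ J) := by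
  intro I J hI hJ hIX hJY
  by_cases heI : e ∈ I
  · have hI' : M.Indep (I \ {e}) := hI.subset diff_subset
    have hI'X : I \ {e} ⊆ X := by
      rintro x ⟨hxI, hxe⟩
      exact (hIX hxI).resolve_left hxe
    obtain ⟨IX, hIXbasis, hsubIX⟩ := hI'.subset_isBasis_of_subset hI'X hXE
    have hIJ' : M.Indep ((I \ {e}) ∪ J) := hglue _ _ hI' hJ hI'X hJY
    by_contra hdep
    have heIJ : e ∉ (I \ {e}) ∪ J := by
      rintro (⟨-, h⟩ | h)
      · exact h rfl
      · exact heY (hJY h)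
    have hecl2 : e ∈ M.closure ((I \ {e}) ∪ J) := by
      by_contra hne
      apply hdep
      have hind : M.Indep (insert e ((I \ {e}) ∪ J)) :=
        (hIJ'.insert_indep_iff_of_notMem heIJ).mpr
          ⟨M.closure_subset_ground X hecl, hne⟩
      have hset : insert e ((I \ {e}) ∪ J) = I ∪ J := by
        ext x
        by_cases hx : x = e <;> simp [hx, heI]
      rwa [hset] at hind
    have hXcl : M.closure IX = M.closure X := hIXbasis.closure_eq_closure
    have hUnion : M.Indep (((I \ {e}) ∪ J) ∪ IX) := by
      have hseteq : ((I \ {e}) ∪ J) ∪ IX = IX ∪ J := by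
        apply subset_antisymm
        · rintro x ((h | h) | h)
          · exact Or.inl (hsubIX h)
          · exact Or.inr h
          · exact Or.inl h
        · rintro x (h | h)
          · exact Or.inr h
          · exact Or.inl (Or.inr h)
      rw [hseteq]
      exact hglue _ _ hIXbasis.indep hJ hIXbasis.subset hJY
    have hinter := hUnion.closure_inter_eq_inter_closure
    have hint : ((I \ {e}) ∪ J) ∩ IX = I \ {e} := by
      apply subset_antisymm
      · rintro x ⟨h | h, hx2⟩
        · exact h
        · exact absurd (hIXbasis.subset hx2)
            (fun hX => Set.disjoint_left.mp hXY hX (hJY h))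
      · exact subset_inter subset_union_left hsubIX
    have hfin : e ∈ M.closure (I \ {e}) := by
      rw [← hint, hinter]
      exact ⟨hecl2, hXcl ▸ hecl⟩
    exact (hI.notMem_closure_diff_of_mem heI) hfin
  · refine hglue I J hI hJ ?_ hJY
    intro x hx
    exact (hIX hx).resolve_left (fun h => heI (h ▸ hx))

/-- If `A, B` glue in `M/e` and `e ∉ cl(A)`, then `A, insert e B` glue in `M`. -/
private lemma glue_extend_con {M : Matroid α} {A B : Set α} (hBE : B ⊆ M.E)
    (hAB : Disjoint A B) {e : α} (heE : e ∈ M.E) (heA : e ∉ A)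
    (hglue2 : ∀ K1 K2, K1 ⊆ A → K2 ⊆ B → M.Indep (insert e K1) → M.Indep (insert e K2) →
      M.Indep (insert e (K1 ∪ K2)))
    (hecl : e ∉ M.closure A) (hel : M.Indep {e}) :
    ∀ I J, M.Indep I → M.Indep J → I ⊆ A → J ⊆ insert e B → M.Indep (I ∪ J) := by
  intro I J hI hJ hIA hJB
  have heI : e ∉ I := fun h => heA (hIA h)
  have hIe : M.Indep (insert e I) := by
    rw [hI.insert_indep_iff_of_notMem heI]
    exact ⟨heE, fun h => hecl (M.closure_subset_closure hIA h)⟩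
  by_cases heJ : e ∈ J
  · have hJ' : M.Indep (insert e (J \ {e})) := by
      rwa [insert_diff_singleton, insert_eq_self.mpr heJ]
    have hJ'B : J \ {e} ⊆ B := fun x hx => (hJB hx.1).resolve_left hx.2
    have hres := hglue2 I (J \ {e}) hIA hJ'B hIe hJ'
    have hset : insert e (I ∪ (J \ {e})) = I ∪ J := by
      ext x
      by_cases hx : x = e <;> simp [hx, heJ]
    rwa [hset] at hres
  · have hJB' : J ⊆ B := fun x hx => (hJB hx).resolve_left (fun h => heJ (h ▸ hx))
    by_cases hJe : M.Indep (insert e J)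
    · exact (hglue2 I J hIA hJB' hIe hJe).subset (subset_insert _ _)
    · have heclJ : e ∈ M.closure J := by
        rw [hJ.insert_indep_iff_of_notMem heJ] at hJe
        by_contra hcc
        exact hJe ⟨heE, hcc⟩
      obtain ⟨T, hT, heT⟩ := hel.subset_isBasis_of_subset
        (singleton_subset_iff.mpr (mem_insert e J))
        (insert_subset heE (hJB'.trans hBE))
      have heTmem : e ∈ T := heT rfl
      set L0 := T \ {e} with hL0def
      have hTeq : T = insert e L0 := by
        rw [hL0def, insert_diff_singleton, insert_eq_self.mpr heTmem]
      have hL0J : L0 ⊆ J := fun x hx => (hT.subset hx.1).resolve_left hx.2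
      have hL0ind : M.Indep (insert e L0) := hTeq ▸ hT.indep
      have heL0 : e ∉ L0 := fun h => h.2 rfl
      have hL0ne : ¬ J ⊆ L0 := by
        intro hsubJ
        apply hJe
        refine hT.indep.subset ?_
        rw [hTeq]
        exact insert_subset_insert hsubJ
      obtain ⟨l, hlJ, hlL0⟩ := not_subset.mp hL0ne
      have hlB : l ∈ B := hJB' hlJ
      -- `l ∈ cl (insert e L0) \ cl L0`, hence `e ∈ cl (insert l L0)`.
      have hlclT : l ∈ M.closure (insert e L0) := by
        rw [← hTeq]
        exact hT.subset_closure (mem_insert_of_mem _ hlJ)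
      have hlncl : l ∉ M.closure L0 := fun h =>
        (hJ.notMem_closure_diff_of_mem hlJ)
          (M.closure_subset_closure (subset_diff_singleton hL0J hlL0) h)
      have hex : e ∈ M.closure (insert l L0) \ M.closure L0 :=
        Matroid.closure_exchange ⟨hlclT, hlncl⟩
      -- every element of `J` outside `L0` is `l`
      have hkey : ∀ m ∈ J, m ∉ L0 → m = l := by
        intro m hm hmL0
        by_contra hml
        have hmcl : m ∈ M.closure (insert l L0) := by
          have h1 : M.closure (insert e L0) ⊆ M.closure (insert l L0) := by
            apply M.closure_subset_closure_of_subset_closure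
            refine insert_subset hex.1 ?_
            exact (M.subset_closure L0 ((hL0J.trans hJB').trans hBE)).trans
              (M.closure_subset_closure (subset_insert _ _))
          refine h1 ?_
          rw [← hTeq]
          exact hT.subset_closure (mem_insert_of_mem _ hm)
        apply hJ.notMem_closure_diff_of_mem hm
        refine M.closure_subset_closure ?_ hmcl
        refine insert_subset ⟨hlJ, fun hc => hml (by simpa using hc.symm)⟩ ?_
        exact fun x hx => ⟨hL0J hx, fun hc => hmL0 (by simpa using hc ▸ hx)⟩
      have hJsub : J ⊆ insert l L0 := by
        intro x hx
        by_cases h : x ∈ L0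
        · exact mem_insert_of_mem _ h
        · exact (hkey x hx h) ▸ mem_insert _ _
      have hW : M.Indep (insert e (I ∪ L0)) :=
        hglue2 I L0 hIA (hL0J.trans hJB') hIe hL0ind
      have hsub2 : I ∪ J ⊆ insert l (I ∪ L0) := by
        rintro x (h | h)
        · exact mem_insert_of_mem _ (Or.inl h)
        · rcases hJsub h with h1 | h1
          · exact h1 ▸ mem_insert _ _
          · exact mem_insert_of_mem _ (Or.inr h1)
      refine Matroid.Indep.subset ?_ hsub2
      by_contra hnind
      have hIL0 : M.Indep (I ∪ L0) := hW.subset (subset_insert _ _)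
      have hlnotin : l ∉ I ∪ L0 := by
        rintro (h | h)
        · exact Set.disjoint_left.mp hAB (hIA h) hlB
        · exact hlL0 h
      have hlcl : l ∈ M.closure (I ∪ L0) := by
        rw [hIL0.insert_indep_iff_of_notMem hlnotin] at hnind
        by_contra hcc
        exact hnind ⟨hBE hlB, hcc⟩
      have hecl2 : e ∈ M.closure (I ∪ L0) := by
        have h1 : M.closure (insert l L0) ⊆ M.closure (insert l (I ∪ L0)) :=
          M.closure_subset_closure (insert_subset_insert subset_union_right)
        have h2 : M.closure (insert l (I ∪ L0)) = M.closure (I ∪ L0) :=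
          Matroid.closure_insert_eq_of_mem_closure hlcl
        exact h2 ▸ h1 hex.1
      have heIL0 : e ∉ I ∪ L0 := by
        rintro (h | h)
        · exact heI h
        · exact heL0 h
      rw [hIL0.insert_indep_iff_of_notMem heIL0] at hW
      exact hW.2 hecl2

end Aux

open Set Matroid

/-- for a loopless connected matroid with at least two elements, for each
element `e`, either `M − e` or `M/e` is connected. -/
theorem stmt12 (M : Matroid α) (hl : Loopless M) (hconn : Connected M)
    (hnt : M.E.Nontrivial) (e : α) (he : e ∈ M.E) :
    Connected (del M {e}) ∨ Connected (con M {e}) := by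
  classical
  by_contra hcontra
  push_neg at hcontra
  obtain ⟨hdel, hcon⟩ := hcontra
  obtain ⟨f, hfE, hfe⟩ := hnt.exists_ne e
  have hne : (M.E \ {e}).Nonempty := ⟨f, hfE, hfe⟩
  have hel : M.Indep {e} := by
    by_contra h; exact hl e ⟨he, h⟩
  have hdelE : (del M {e}).E = M.E \ {e} := by
    simp [del]
  have hconE : (con M {e}).E = M.E \ {e} := by
    simp [con, del]
  -- extract the deletion decomposition
  rw [Connected, not_and, not_not] at hdel
  obtain ⟨M1, M2, h1ne, h2ne, hd1, hsum1⟩ := hdel (by rwa [hdelE])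
  rw [Connected, not_and, not_not] at hcon
  obtain ⟨M3, M4, h3ne, h4ne, hd2, hsum2⟩ := hcon (by rwa [hconE])
  set X := M1.E with hXdef
  set Y := M2.E with hYdef
  set A := M3.E with hAdef
  set B := M4.E with hBdef
  have hXYg : M.E \ {e} = X ∪ Y := by
    rw [← hdelE, hsum1]; simp; rfl
  have hABg : M.E \ {e} = A ∪ B := by
    rw [← hconE, hsum2]; simp; rfl
  have hXE : X ⊆ M.E \ {e} := hXYg ▸ subset_union_left
  have hYE : Y ⊆ M.E \ {e} := hXYg ▸ subset_union_right
  have hAE : A ⊆ M.E \ {e} := hABg ▸ subset_union_left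
  have hBE : B ⊆ M.E \ {e} := hABg ▸ subset_union_right
  have heX : e ∉ X := fun h => (hXE h).2 rfl
  have heY : e ∉ Y := fun h => (hYE h).2 rfl
  have heA : e ∉ A := fun h => (hAE h).2 rfl
  have heB : e ∉ B := fun h => (hBE h).2 rfl
  -- translate gluing on `del M {e}` to `M`
  have SX : ∀ I J, M.Indep I → M.Indep J → I ⊆ X → J ⊆ Y → M.Indep (I ∪ J) := by
    intro I J hI hJ hIX hJY
    have hI' : (del M {e}).Indep I := by
      rw [del, Matroid.restrict_indep_iff]
      exact ⟨hI, (hIX.trans hXE)⟩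
    have hJ' : (del M {e}).Indep J := by
      rw [del, Matroid.restrict_indep_iff]
      exact ⟨hJ, (hJY.trans hYE)⟩
    have := dirSum_glue hsum1 I J hI' hJ' hIX hJY
    rw [del, Matroid.restrict_indep_iff] at this
    exact this.1
  have SX' : ∀ I J, M.Indep I → M.Indep J → I ⊆ Y → J ⊆ X → M.Indep (I ∪ J) := by
    intro I J hI hJ hIY hJX
    rw [Set.union_comm]
    exact SX J I hJ hI hJX hIY
  -- translate gluing on `con M {e}` to `M`
  have S2 : ∀ K1 K2, K1 ⊆ A → K2 ⊆ B → M.Indep (insert e K1) → M.Indep (insert e K2) →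
      M.Indep (insert e (K1 ∪ K2)) := by
    intro K1 K2 hK1 hK2 hI1 hI2
    have h1 : (con M {e}).Indep K1 := (con_indep_iff hel).mpr ⟨hK1.trans hAE, hI1⟩
    have h2 : (con M {e}).Indep K2 := (con_indep_iff hel).mpr ⟨hK2.trans hBE, hI2⟩
    have := dirSum_glue hsum2 K1 K2 h1 h2 hK1 hK2
    exact ((con_indep_iff hel).mp this).2
  have S2' : ∀ K1 K2, K1 ⊆ B → K2 ⊆ A → M.Indep (insert e K1) → M.Indep (insert e K2) →
      M.Indep (insert e (K1 ∪ K2)) := by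
    intro K1 K2 hK1 hK2 hI1 hI2
    rw [Set.union_comm]
    exact S2 K2 K1 hK2 hK1 hI2 hI1
  have hXY : Disjoint X Y := hd1
  have hAB : Disjoint A B := hd2
  -- complements in M.E
  have hcomplX : M.E \ insert e X = Y := by
    apply subset_antisymm
    · rintro x ⟨hx1, hx2⟩
      have hx3 : x ∈ M.E \ {e} := ⟨hx1, fun h => hx2 (h ▸ mem_insert _ _)⟩
      rcases hXYg ▸ hx3 with h | h
      · exact absurd (mem_insert_of_mem _ h) hx2
      · exact h
    · intro x hx
      refine ⟨(hYE hx).1, ?_⟩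
      rintro (rfl | h)
      · exact heY hx
      · exact Set.disjoint_left.mp hXY h hx
  have hcomplY : M.E \ insert e Y = X := by
    apply subset_antisymm
    · rintro x ⟨hx1, hx2⟩
      have hx3 : x ∈ M.E \ {e} := ⟨hx1, fun h => hx2 (h ▸ mem_insert _ _)⟩
      rcases hXYg ▸ hx3 with h | h
      · exact h
      · exact absurd (mem_insert_of_mem _ h) hx2
    · intro x hx
      refine ⟨(hXE hx).1, ?_⟩
      rintro (rfl | h)
      · exact heX hx
      · exact Set.disjoint_left.mp hXY hx h
  have hcomplA : M.E \ A = insert e B := by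
    apply subset_antisymm
    · rintro x ⟨hx1, hx2⟩
      by_cases hxe : x = e
      · exact hxe ▸ mem_insert _ _
      · have hx3 : x ∈ M.E \ {e} := ⟨hx1, hxe⟩
        rcases hABg ▸ hx3 with h | h
        · exact absurd h hx2
        · exact mem_insert_of_mem _ h
    · intro x hx
      rcases hx with rfl | h
      · exact ⟨he, heA⟩
      · exact ⟨(hBE h).1, fun hc => Set.disjoint_left.mp hAB hc h⟩
  have hcomplB : M.E \ B = insert e A := by
    apply subset_antisymm
    · rintro x ⟨hx1, hx2⟩
      by_cases hxe : x = e
      · exact hxe ▸ mem_insert _ _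
      · have hx3 : x ∈ M.E \ {e} := ⟨hx1, hxe⟩
        rcases hABg ▸ hx3 with h | h
        · exact mem_insert_of_mem _ h
        · exact absurd h hx2
    · intro x hx
      rcases hx with rfl | h
      · exact ⟨he, heB⟩
      · exact ⟨(hAE h).1, fun hc => Set.disjoint_left.mp hAB h hc⟩
  -- e is not in the closure of X nor Y
  have FX : e ∉ M.closure X := by
    intro hecl
    refine glue_not_connected M (insert e X) ?_ ?_ ?_ ?_ hconn
    · exact insert_subset he (hXE.trans diff_subset)
    · exact insert_nonempty _ _
    · rw [hcomplX]; exact h2ne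
    · intro I J hI hJ hIZ hJZ
      rw [hcomplX] at hJZ
      exact glue_extend_del (hXE.trans diff_subset) hXY SX hecl heY I J hI hJ hIZ hJZ
  have FY : e ∉ M.closure Y := by
    intro hecl
    refine glue_not_connected M (insert e Y) ?_ ?_ ?_ ?_ hconn
    · exact insert_subset he (hYE.trans diff_subset)
    · exact insert_nonempty _ _
    · rw [hcomplY]; exact h1ne
    · intro I J hI hJ hIZ hJZ
      rw [hcomplY] at hJZ
      exact glue_extend_del (hYE.trans diff_subset) hXY.symm SX' hecl heX I J hI hJ hIZ hJZ
  -- e is in the closure of A and of B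
  have FA : e ∈ M.closure A := by
    by_contra hecl
    refine glue_not_connected M A (hAE.trans diff_subset) h3ne ?_ ?_ hconn
    · rw [hcomplA]; exact insert_nonempty _ _
    · intro I J hI hJ hIZ hJZ
      rw [hcomplA] at hJZ
      exact glue_extend_con (hBE.trans diff_subset) hAB he heA S2 hecl hel I J hI hJ hIZ hJZ
  have FB : e ∈ M.closure B := by
    by_contra hecl
    refine glue_not_connected M B (hBE.trans diff_subset) h4ne ?_ ?_ hconn
    · rw [hcomplB]; exact insert_nonempty _ _
    · intro I J hI hJ hIZ hJZ
      rw [hcomplB] at hJZ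
      exact glue_extend_con (hAE.trans diff_subset) hAB.symm he heB S2' hecl hel I J hI hJ hIZ hJZ
  -- final contradiction
  obtain ⟨IX, hIX⟩ := M.exists_isBasis X (hXE.trans diff_subset)
  obtain ⟨IA2, hIA2⟩ := M.exists_isBasis (A ∩ Y) ((inter_subset_right.trans hYE).trans diff_subset)
  obtain ⟨IB2, hIB2⟩ := M.exists_isBasis (B ∩ Y) ((inter_subset_right.trans hYE).trans diff_subset)
  have hIA2Y : IA2 ⊆ Y := hIA2.subset.trans inter_subset_right
  have hIB2Y : IB2 ⊆ Y := hIB2.subset.trans inter_subset_right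
  have hIA2A : IA2 ⊆ A := hIA2.subset.trans inter_subset_left
  have hIB2B : IB2 ⊆ B := hIB2.subset.trans inter_subset_left
  have hIA2e : M.Indep (insert e IA2) := by
    rw [hIA2.indep.insert_indep_iff_of_notMem (fun h => heY (hIA2Y h))]
    exact ⟨he, fun h => FY (M.closure_subset_closure hIA2Y h)⟩
  have hIB2e : M.Indep (insert e IB2) := by
    rw [hIB2.indep.insert_indep_iff_of_notMem (fun h => heY (hIB2Y h))]
    exact ⟨he, fun h => FY (M.closure_subset_closure hIB2Y h)⟩
  have hYind : M.Indep (IA2 ∪ IB2) :=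
    (S2 IA2 IB2 hIA2A hIB2B hIA2e hIB2e).subset (subset_insert _ _)
  have hGind : M.Indep (IX ∪ (IA2 ∪ IB2)) :=
    SX IX (IA2 ∪ IB2) hIX.indep hYind hIX.subset (union_subset hIA2Y hIB2Y)
  have hUind : M.Indep ((IX ∪ IA2) ∪ (IX ∪ IB2)) := by
    have hseteq : (IX ∪ IA2) ∪ (IX ∪ IB2) = IX ∪ (IA2 ∪ IB2) := by
      ext x
      simp only [Set.mem_union]
      tauto
    rw [hseteq]
    exact hGind
  have hcl1 : e ∈ M.closure (IX ∪ IA2) := by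
    have hAsub : A ⊆ X ∪ (A ∩ Y) := by
      intro x hx
      rcases hXYg ▸ (hAE hx) with h | h
      · exact Or.inl h
      · exact Or.inr ⟨hx, h⟩
    have hcalc : M.closure (X ∪ (A ∩ Y)) = M.closure (IX ∪ IA2) := by
      calc M.closure (X ∪ (A ∩ Y))
          = M.closure (M.closure X ∪ M.closure (A ∩ Y)) :=
            (M.closure_closure_union_closure_eq_closure_union _ _).symm
        _ = M.closure (M.closure IX ∪ M.closure IA2) := by
            rw [hIX.closure_eq_closure, hIA2.closure_eq_closure]
        _ = M.closure (IX ∪ IA2) :=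
            M.closure_closure_union_closure_eq_closure_union _ _
    exact hcalc ▸ (M.closure_subset_closure hAsub FA)
  have hcl2 : e ∈ M.closure (IX ∪ IB2) := by
    have hBsub : B ⊆ X ∪ (B ∩ Y) := by
      intro x hx
      rcases hXYg ▸ (hBE hx) with h | h
      · exact Or.inl h
      · exact Or.inr ⟨hx, h⟩
    have hcalc : M.closure (X ∪ (B ∩ Y)) = M.closure (IX ∪ IB2) := by
      calc M.closure (X ∪ (B ∩ Y))
          = M.closure (M.closure X ∪ M.closure (B ∩ Y)) :=
            (M.closure_closure_union_closure_eq_closure_union _ _).symm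
        _ = M.closure (M.closure IX ∪ M.closure IB2) := by
            rw [hIX.closure_eq_closure, hIB2.closure_eq_closure]
        _ = M.closure (IX ∪ IB2) :=
            M.closure_closure_union_closure_eq_closure_union _ _
    exact hcalc ▸ (M.closure_subset_closure hBsub FB)
  have hinter := hUind.closure_inter_eq_inter_closure
  have hint : (IX ∪ IA2) ∩ (IX ∪ IB2) = IX := by
    apply subset_antisymm
    · rintro x ⟨h1 | h1, h2 | h2⟩
      · exact h1
      · exact h1
      · exact h2
      · exact absurd (Set.disjoint_left.mp hAB (hIA2A h1)) (fun hc => hc (hIB2B h2))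
    · exact subset_inter subset_union_left subset_union_left
  have : e ∈ M.closure IX := by
    rw [← hint, hinter]
    exact ⟨hcl1, hcl2⟩
  exact FX (hIX.closure_eq_closure ▸ this)

end

end SPPaper
end
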